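/- arXiv:2505.20153 — 3 statements merged into one kernel-verified Lean document; each statement's English description precedes it below -/
import Mathlib

section
/- Fix α ∈ (0,1) and let p be the zeta distribution p_j = j^{−1/α} / ζ(1/α) for j ∈ ℕ, where ζ(s) = ∑_{j≥1} j^{−s}. Then there exists a constant c > 0 such that for all positive integers n, ∑_{k=n}^{∞} (1/k) E[(1 − p(X))^k] ≥ c / n^{1−α}, where E[(1−p(X))^k] = ∑_j p_j (1−p_j)^k. Consequently, the bias of the harmonic entropy estimator is of exact order n^{−(1−α)} for this distribution, so the upper bound C/n^{1−α} on the bias is tight. -/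
open Filter Asymptotics

/-- `J m` is the `m`-th harmonic number, with `J 0 = 0`. -/
noncomputable def J (m : ℕ) : ℝ := ∑ k ∈ Finset.range m, (1 : ℝ) / (k + 1)

/-- `mcount x i` is the number of occurrences of the symbol `x i` in the sample `x`. -/
def mcount {n : ℕ} (x : Fin n → ℕ+) (i : Fin n) : ℕ :=
  (Finset.univ.filter fun k => x k = x i).card

/-- The harmonic entropy estimator. -/
noncomputable def Hhat {n : ℕ} (x : Fin n → ℕ+) : ℝ :=
  ((n : ℝ))⁻¹ * ∑ i, (J (n - 1) - J (mcount x i - 1))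

/-- The probability that an i.i.d. sample of size `n` from the pmf `p` equals `x`. -/
noncomputable def Pn {n : ℕ} (p : ℕ+ → ℝ) (x : Fin n → ℕ+) : ℝ := ∏ i, p (x i)

/-- The expectation of the harmonic entropy estimator over an i.i.d. sample of size `n`. -/
noncomputable def EHhat (p : ℕ+ → ℝ) (n : ℕ) : ℝ := ∑' x : Fin n → ℕ+, Pn p x * Hhat x

/-- The Shannon entropy of the pmf `p`. -/
noncomputable def Hent (p : ℕ+ → ℝ) : ℝ := -∑' j : ℕ+, p j * Real.log (p j)

lemma J_nonneg (m : ℕ) : 0 ≤ J m := Finset.sum_nonneg (fun k _ => by positivity)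

lemma J_mono : Monotone J := by
  intro a b hab
  exact Finset.sum_le_sum_of_subset_of_nonneg (Finset.range_subset_range.2 hab)
    (fun k _ _ => by positivity)

lemma J_succ (m : ℕ) : J (m + 1) = J m + 1 / (m + 1) := Finset.sum_range_succ _ m

/-- binomial weight -/
noncomputable def bin (m : ℕ) (t : ℝ) (b : ℕ) : ℝ := (m.choose b : ℝ) * t ^ b * (1 - t) ^ (m - b)

lemma bin_sum (m : ℕ) (t : ℝ) : ∑ b ∈ Finset.range (m + 1), bin m t b = 1 := by
  have h := add_pow t (1 - t) m
  simp only [add_sub_cancel, one_pow] at h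
  rw [eq_comm, h]
  exact Finset.sum_congr rfl fun b _ => by unfold bin; ring

lemma bin_split (m : ℕ) (t : ℝ) (g : ℕ → ℝ) :
    ∑ b ∈ Finset.range (m + 2), bin (m + 1) t b * g b
      = (1 - t) * ∑ b ∈ Finset.range (m + 1), bin m t b * g b
        + t * ∑ b ∈ Finset.range (m + 1), bin m t b * g (b + 1) := by
  have hA : ∀ b ∈ Finset.range (m+2), bin (m+1) t b * g b
      = (((m.choose b : ℝ) * t ^ b * (1-t)^(m+1-b)) * g b)
        + (if b = 0 then 0 else ((m.choose (b-1) : ℝ) * t ^ b * (1-t)^(m+1-b)) * g b) := by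
    intro b _
    cases b with
    | zero => simp [bin]
    | succ s =>
      simp only [if_neg (Nat.succ_ne_zero s), Nat.succ_sub_one, bin]
      rw [Nat.choose_succ_succ]
      push_cast
      ring
  rw [Finset.sum_congr rfl hA, Finset.sum_add_distrib]
  congr 1
  · -- first piece
    rw [Finset.sum_range_succ, Finset.mul_sum]
    have hz : (((m.choose (m+1) : ℝ) * t ^ (m+1) * (1-t)^(m+1-(m+1))) * g (m+1)) = 0 := by
      simp [Nat.choose_eq_zero_of_lt]
    rw [hz, add_zero]
    refine Finset.sum_congr rfl fun b hb => ?_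
    have hb' : b ≤ m := Nat.lt_succ_iff.1 (Finset.mem_range.1 hb)
    have he : m + 1 - b = (m - b) + 1 := by omega
    rw [he, bin]
    ring
  · -- second piece
    rw [Finset.sum_range_succ' (fun b => if b = 0 then 0 else ((m.choose (b-1) : ℝ) * t ^ b * (1-t)^(m+1-b)) * g b) (m+1)]
    simp only [Nat.succ_ne_zero, if_false, if_true, Nat.succ_sub_one, add_zero, reduceIte]
    rw [Finset.mul_sum]
    refine Finset.sum_congr rfl fun b hb => ?_
    have hb' : b ≤ m := Nat.lt_succ_iff.1 (Finset.mem_range.1 hb)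
    have he : m + 1 - (b + 1) = m - b := by omega
    rw [he, bin]
    ring

lemma bin_recip (m : ℕ) (t : ℝ) :
    ∑ b ∈ Finset.range (m + 1), bin m t b * (t / (b + 1))
      = (1 - (1 - t) ^ (m + 1)) / (m + 1) := by
  have key : ∀ b ∈ Finset.range (m+1),
      bin m t b * (t / (b+1)) = bin (m+1) t (b+1) * (1 / (m+1)) := by
    intro b hb
    have hb' : b ≤ m := Nat.lt_succ_iff.1 (Finset.mem_range.1 hb)
    have hch : ((m:ℝ) + 1) * (m.choose b : ℝ) = ((m+1).choose (b+1) : ℝ) * ((b:ℝ) + 1) := by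
      exact_mod_cast congrArg (Nat.cast (R := ℝ)) (Nat.add_one_mul_choose_eq m b)
    have hsub : m + 1 - (b + 1) = m - b := by omega
    have hm1 : ((m:ℝ)+1) ≠ 0 := by positivity
    have hb1 : ((b:ℝ)+1) ≠ 0 := by positivity
    have hc : (m.choose b : ℝ) = ((m+1).choose (b+1) : ℝ) * ((b:ℝ)+1) / ((m:ℝ)+1) := by
      field_simp
      linarith [hch]
    rw [bin, bin, hsub, hc]
    field_simp
    ring
  rw [Finset.sum_congr rfl key, ← Finset.sum_mul]
  have h2 : ∑ b ∈ Finset.range (m+1), bin (m+1) t (b+1)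
      = ∑ b ∈ Finset.range (m+2), bin (m+1) t b - bin (m+1) t 0 := by
    rw [Finset.sum_range_succ' (fun b => bin (m+1) t b) (m+1)]
    ring
  rw [h2, bin_sum]
  have hb0 : bin (m+1) t 0 = (1-t)^(m+1) := by simp [bin]
  rw [hb0]
  ring

lemma bin_J (m : ℕ) (t : ℝ) :
    ∑ b ∈ Finset.range (m + 1), bin m t b * (J m - J b)
      = ∑ k ∈ Finset.range m, (1 - t) ^ (k + 1) / (k + 1) := by
  induction m with
  | zero => simp
  | succ m ih =>
    have hsplit := bin_split m t (fun b => J (m+1) - J b)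
    beta_reduce at hsplit
    rw [hsplit]
    have e1 : ∑ b ∈ Finset.range (m+1), bin m t b * (J (m+1) - J b)
        = (∑ b ∈ Finset.range (m+1), bin m t b * (J m - J b))
          + (1/((m:ℝ)+1)) * ∑ b ∈ Finset.range (m+1), bin m t b := by
      rw [Finset.mul_sum, ← Finset.sum_add_distrib]
      refine Finset.sum_congr rfl fun b _ => ?_
      rw [J_succ]; push_cast; ring
    have e2 : ∑ b ∈ Finset.range (m+1), bin m t b * (J (m+1) - J (b+1))
        = (∑ b ∈ Finset.range (m+1), bin m t b * (J m - J b))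
          + (1/((m:ℝ)+1)) * ∑ b ∈ Finset.range (m+1), bin m t b
          - ∑ b ∈ Finset.range (m+1), bin m t b * (1/((b:ℝ)+1)) := by
      rw [Finset.mul_sum]
      rw [show (∑ b ∈ Finset.range (m+1), bin m t b * (J m - J b))
          + (∑ b ∈ Finset.range (m+1), 1/((m:ℝ)+1) * bin m t b)
          - ∑ b ∈ Finset.range (m+1), bin m t b * (1/((b:ℝ)+1))
        = ∑ b ∈ Finset.range (m+1), (bin m t b * (J m - J b) + 1/((m:ℝ)+1) * bin m t b
            - bin m t b * (1/((b:ℝ)+1))) from by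
          rw [Finset.sum_sub_distrib, Finset.sum_add_distrib]]
      refine Finset.sum_congr rfl fun b _ => ?_
      rw [J_succ, J_succ]; push_cast; ring
    rw [e1, e2, bin_sum, ih, Finset.sum_range_succ (fun k => (1-t)^(k+1)/((k:ℝ)+1)) m]
    have hR : t * ∑ b ∈ Finset.range (m+1), bin m t b * (1/((b:ℝ)+1))
        = (1 - (1-t)^(m+1))/((m:ℝ)+1) := by
      rw [Finset.mul_sum, ← bin_recip]
      refine Finset.sum_congr rfl fun b _ => ?_
      push_cast; ring
    push_cast
    linear_combination -hR


/-- number of occurrences of `j` in `y` -/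
def cnt {m : ℕ} (y : Fin m → ℕ+) (j : ℕ+) : ℕ := (Finset.univ.filter fun k => y k = j).card

lemma cnt_cons {m : ℕ} (a : ℕ+) (y : Fin m → ℕ+) (j : ℕ+) :
    cnt (Fin.cons a y) j = cnt y j + (if a = j then 1 else 0) := by
  unfold cnt
  rw [Finset.card_filter, Finset.card_filter, Fin.sum_univ_succ]
  simp [Fin.cons_zero, Fin.cons_succ, add_comm]

lemma cnt_le {m : ℕ} (y : Fin m → ℕ+) (j : ℕ+) : cnt y j ≤ m := by
  simpa [cnt] using (Finset.card_filter_le Finset.univ fun k => y k = j)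

section pmf
variable {p : ℕ+ → ℝ} (hp0 : ∀ j, 0 ≤ p j) (hsum : Summable p) (htot : ∑' j, p j = 1)

include hp0 hsum htot in
lemma hasSum_binom (m : ℕ) (g : ℕ → ℝ) (hg : ∀ b, 0 ≤ g b) (j : ℕ+) :
    HasSum (fun y : Fin m → ℕ+ => (∏ k, p (y k)) * g (cnt y j))
      (∑ b ∈ Finset.range (m + 1), bin m (p j) b * g b) := by
  induction m generalizing g with
  | zero =>
    have hu := hasSum_single (f := fun y : Fin 0 → ℕ+ => (∏ k, p (y k)) * g (cnt y j))
      (fun _ => 1) (fun y hy => absurd (Subsingleton.elim _ _) hy)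
    simpa [bin, cnt] using hu
  | succ m ih =>
    set t := p j with ht
    set S0 : ℝ := ∑ b ∈ Finset.range (m+1), bin m t b * g b with hS0
    set S1 : ℝ := ∑ b ∈ Finset.range (m+1), bin m t b * g (b+1) with hS1
    -- fiberwise sums
    have fib : ∀ a : ℕ+, HasSum (fun y : Fin m → ℕ+ =>
        p a * ((∏ k, p (y k)) * g (cnt y j + (if a = j then 1 else 0))))
        (p a * (if a = j then S1 else S0)) := by
      intro a
      by_cases ha : a = j
      · subst ha
        simpa using (ih (fun b => g (b+1)) (fun b => hg (b+1))).mul_left (p a)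
      · simpa [ha] using (ih g hg).mul_left (p a)
    -- sum over a of fiber sums
    have hs : HasSum (fun a : ℕ+ => p a * (if a = j then S1 else S0)) (t * S1 + (1 - t) * S0) := by
      have h1 : HasSum (fun a : ℕ+ => p a * S0) S0 := by
        simpa [htot] using hsum.hasSum.mul_right S0
      have h2 : HasSum (fun a : ℕ+ => if a = j then p j * (S1 - S0) else 0) (p j * (S1 - S0)) :=
        hasSum_ite_eq j _
      have h3 := h1.add h2
      have he : (fun a : ℕ+ => p a * S0 + if a = j then p j * (S1 - S0) else 0)
          = fun a : ℕ+ => p a * (if a = j then S1 else S0) := by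
        funext a
        by_cases ha : a = j <;> simp [ha] <;> ring
      rw [he] at h3
      convert h3 using 1
      ring
    -- product summability
    set F : ℕ+ × (Fin m → ℕ+) → ℝ := fun z =>
      p z.1 * ((∏ k, p (z.2 k)) * g (cnt z.2 j + (if z.1 = j then 1 else 0))) with hF
    have hFnn : 0 ≤ F := by
      intro z
      have := Finset.prod_nonneg (fun k (_ : k ∈ Finset.univ) => hp0 (z.2 k))
      exact mul_nonneg (hp0 z.1) (mul_nonneg this (hg _))
    have hFsum : Summable F := by
      rw [summable_prod_of_nonneg hFnn]
      refine ⟨fun a => (fib a).summable, ?_⟩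
      have : (fun a : ℕ+ => ∑' y, F (a, y)) = fun a => p a * (if a = j then S1 else S0) := by
        funext a
        exact (fib a).tsum_eq
      rw [this]
      exact hs.summable
    have hFval : HasSum F (t * S1 + (1 - t) * S0) := by
      have h1 : ∑' z, F z = t * S1 + (1 - t) * S0 := by
        rw [Summable.tsum_prod' hFsum (fun a => (fib a).summable)]
        calc (∑' (a : ℕ+), ∑' (y : Fin m → ℕ+), F (a, y))
            = ∑' (a : ℕ+), p a * (if a = j then S1 else S0) :=
              tsum_congr (fun a => (fib a).tsum_eq)
          _ = t * S1 + (1 - t) * S0 := hs.tsum_eq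
      exact h1 ▸ hFsum.hasSum
    -- transfer along consEquiv
    set e := Fin.consEquiv (fun _ : Fin (m+1) => ℕ+) with he
    have hcomp : ((fun x : Fin (m+1) → ℕ+ => (∏ k, p (x k)) * g (cnt x j)) ∘ e) = F := by
      funext z
      obtain ⟨a, y⟩ := z
      simp only [Function.comp_apply, he, hF]
      rw [show (Fin.consEquiv fun _ : Fin (m+1) => ℕ+) (a, y) = Fin.cons a y from rfl]
      rw [Fin.prod_univ_succ]
      simp [Fin.cons_zero, Fin.cons_succ, cnt_cons, mul_assoc]
    have hval : t * S1 + (1 - t) * S0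
        = ∑ b ∈ Finset.range (m + 1 + 1), bin (m + 1) t b * g b := by
      rw [show m + 1 + 1 = m + 2 from rfl, bin_split m t g]
      ring
    rw [← hval]
    exact e.hasSum_iff.1 (hcomp ▸ hFval)


end pmf

section pmfB
variable {p : ℕ+ → ℝ} (hp0 : ∀ j, 0 ≤ p j) (hsum : Summable p) (htot : ∑' j, p j = 1)

lemma mcount_le {n : ℕ} (x : Fin n → ℕ+) (i : Fin n) : mcount x i ≤ n := by
  simpa [mcount] using (Finset.card_filter_le Finset.univ fun k => x k = x i)

lemma mcount_cons_zero {m : ℕ} (a : ℕ+) (y : Fin m → ℕ+) :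
    mcount (Fin.cons a y) 0 = cnt y a + 1 := by
  unfold mcount
  rw [Fin.cons_zero]
  have := cnt_cons a y a
  unfold cnt at this
  simpa [cnt] using this

lemma mcount_comp {n : ℕ} (σ : Equiv.Perm (Fin n)) (x : Fin n → ℕ+) (i : Fin n) :
    mcount (x ∘ σ) i = mcount x (σ i) := by
  unfold mcount
  apply Finset.card_bij (fun k _ => σ k)
  · intro k hk
    simp only [Finset.mem_filter, Finset.mem_univ, true_and] at hk ⊢
    exact hk
  · intro k _ k' _ h
    exact σ.injective h
  · intro k hk
    simp only [Finset.mem_filter, Finset.mem_univ, true_and] at hk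
    exact ⟨σ.symm k, by simp [hk], by simp⟩

/-- weight function for step B -/
noncomputable def W (p : ℕ+ → ℝ) (m : ℕ) (a : ℕ+) : ℝ :=
  ∑ k ∈ Finset.range m, (1 - p a) ^ (k + 1) / ((k : ℝ) + 1)

lemma W_nonneg (hp1 : ∀ j, p j ≤ 1) (m : ℕ) (a : ℕ+) : 0 ≤ W p m a := by
  apply Finset.sum_nonneg
  intro k _
  have : (0:ℝ) ≤ 1 - p a := by linarith [hp1 a]
  positivity

include hp0 in
lemma W_le (hp1 : ∀ j, p j ≤ 1) (m : ℕ) (a : ℕ+) : W p m a ≤ J m := by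
  apply Finset.sum_le_sum
  intro k _
  have h0 : (0:ℝ) ≤ 1 - p a := by linarith [hp1 a]
  have h1 : (1 - p a) ^ (k+1) ≤ 1 := pow_le_one₀ h0 (by linarith [hp0 a])
  rw [div_le_div_iff₀ (by positivity) (by positivity)]
  nlinarith

include hp0 hsum htot in
lemma stepB (hp1 : ∀ j, p j ≤ 1) (m : ℕ) :
    ∑' x : Fin (m+1) → ℕ+, Pn p x * (J m - J (mcount x 0 - 1))
      = ∑' a : ℕ+, p a * W p m a := by
  classical
  set gm : ℕ → ℝ := fun b => J m - J (min b m) with hgm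
  have hgmnn : ∀ b, 0 ≤ gm b := fun b => by
    simp only [hgm, sub_nonneg]
    exact J_mono (min_le_right _ _)
  set F : ℕ+ × (Fin m → ℕ+) → ℝ := fun z =>
    p z.1 * ((∏ k, p (z.2 k)) * gm (cnt z.2 z.1)) with hF
  have fib : ∀ a : ℕ+, HasSum (fun y : Fin m → ℕ+ => F (a, y))
      (p a * ∑ b ∈ Finset.range (m+1), bin m (p a) b * gm b) := by
    intro a
    exact (hasSum_binom hp0 hsum htot m gm hgmnn a).mul_left (p a)
  have hVW : ∀ a : ℕ+, (∑ b ∈ Finset.range (m+1), bin m (p a) b * gm b) = W p m a := by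
    intro a
    unfold W
    rw [← bin_J m (p a)]
    refine Finset.sum_congr rfl fun b hb => ?_
    have : min b m = b := min_eq_left (Nat.lt_succ_iff.1 (Finset.mem_range.1 hb))
    simp [hgm, this]
  have hFnn : 0 ≤ F := fun z =>
    mul_nonneg (hp0 _) (mul_nonneg (Finset.prod_nonneg fun k _ => hp0 _) (hgmnn _))
  have hWsummable : Summable (fun a : ℕ+ => p a * W p m a) := by
    apply Summable.of_nonneg_of_le (fun a => mul_nonneg (hp0 a) (W_nonneg hp1 m a))
      (fun a => mul_le_mul_of_nonneg_left (W_le hp0 hp1 m a) (hp0 a))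
    exact hsum.mul_right (J m)
  have hFsum : Summable F := by
    rw [summable_prod_of_nonneg hFnn]
    refine ⟨fun a => (fib a).summable, ?_⟩
    have he : (fun a : ℕ+ => ∑' y, F (a, y)) = fun a => p a * W p m a := by
      funext a
      rw [(fib a).tsum_eq, hVW a]
    rw [he]
    exact hWsummable
  -- transfer
  set e := Fin.consEquiv (fun _ : Fin (m+1) => ℕ+) with he
  have hcomp : ((fun x : Fin (m+1) → ℕ+ => Pn p x * (J m - J (mcount x 0 - 1))) ∘ e) = F := by
    funext z
    obtain ⟨a, y⟩ := z
    simp only [Function.comp_apply, he, hF]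
    rw [show (Fin.consEquiv fun _ : Fin (m+1) => ℕ+) (a, y) = Fin.cons a y from rfl]
    rw [mcount_cons_zero, Nat.add_sub_cancel]
    unfold Pn
    rw [Fin.prod_univ_succ]
    have hmin : min (cnt y a) m = cnt y a := min_eq_left (cnt_le y a)
    simp [Fin.cons_zero, Fin.cons_succ, hgm, hmin, mul_assoc]
  calc ∑' x : Fin (m+1) → ℕ+, Pn p x * (J m - J (mcount x 0 - 1))
      = ∑' z : ℕ+ × (Fin m → ℕ+), F z := by
        rw [← hcomp]
        exact (Equiv.tsum_eq e _).symm
    _ = ∑' (a : ℕ+), ∑' (y : Fin m → ℕ+), F (a, y) :=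
        Summable.tsum_prod' hFsum (fun a => (fib a).summable)
    _ = ∑' a : ℕ+, p a * W p m a := by
        refine tsum_congr fun a => ?_
        rw [(fib a).tsum_eq, hVW a]

lemma stepA {m : ℕ} (i : Fin (m+1)) :
    ∑' x : Fin (m+1) → ℕ+, Pn p x * (J m - J (mcount x i - 1))
      = ∑' x : Fin (m+1) → ℕ+, Pn p x * (J m - J (mcount x 0 - 1)) := by
  classical
  set σ := Equiv.swap (0 : Fin (m+1)) i with hσ
  set e : (Fin (m+1) → ℕ+) ≃ (Fin (m+1) → ℕ+) := Equiv.arrowCongr σ.symm (Equiv.refl ℕ+) with he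
  have key : ∀ x : Fin (m+1) → ℕ+,
      Pn p (e x) * (J m - J (mcount (e x) i - 1)) = Pn p x * (J m - J (mcount x 0 - 1)) := by
    intro x
    have hex : e x = x ∘ σ := by
      funext k
      simp [he, Equiv.arrowCongr]
    rw [hex]
    have h1 : Pn p (x ∘ σ) = Pn p x := by
      unfold Pn
      exact Equiv.prod_comp σ (fun k => p (x k))
    have h2 : mcount (x ∘ σ) i = mcount x 0 := by
      rw [mcount_comp σ x i, hσ, Equiv.swap_apply_right]
    rw [h1, h2]
  calc ∑' x, Pn p x * (J m - J (mcount x i - 1))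
      = ∑' x, Pn p (e x) * (J m - J (mcount (e x) i - 1)) := (Equiv.tsum_eq e _).symm
    _ = ∑' x, Pn p x * (J m - J (mcount x 0 - 1)) := tsum_congr key

include hp0 hsum htot in
lemma hasSum_Pn (m : ℕ) : HasSum (fun y : Fin m → ℕ+ => Pn p y) 1 := by
  have := hasSum_binom hp0 hsum htot m (fun _ => 1) (fun _ => zero_le_one) 1
  simpa [Pn, mul_one, bin_sum] using this

include hp0 hsum htot in
lemma EHhat_eq (hp1 : ∀ j, p j ≤ 1) (m : ℕ) :
    EHhat p (m+1) = ∑' a : ℕ+, p a * W p m a := by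
  classical
  unfold EHhat
  have hterm_nonneg : ∀ (x : Fin (m+1) → ℕ+) (i : Fin (m+1)),
      0 ≤ J m - J (mcount x i - 1) := by
    intro x i
    have : mcount x i - 1 ≤ m := by have := mcount_le x i; omega
    linarith [J_mono this]
  have hterm_le : ∀ (x : Fin (m+1) → ℕ+) (i : Fin (m+1)),
      J m - J (mcount x i - 1) ≤ J m := by
    intro x i
    linarith [J_nonneg (mcount x i - 1)]
  have hPn_nonneg : ∀ x : Fin (m+1) → ℕ+, 0 ≤ Pn p x :=
    fun x => Finset.prod_nonneg fun k _ => hp0 _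
  have hsummable : ∀ i : Fin (m+1),
      Summable (fun x : Fin (m+1) → ℕ+ => Pn p x * (J m - J (mcount x i - 1))) := by
    intro i
    apply Summable.of_nonneg_of_le
      (fun x => mul_nonneg (hPn_nonneg x) (hterm_nonneg x i))
      (fun x => mul_le_mul_of_nonneg_left (hterm_le x i) (hPn_nonneg x))
    exact (hasSum_Pn hp0 hsum htot (m+1)).summable.mul_right (J m)
  have hsimp : (fun x : Fin (m+1) → ℕ+ => Pn p x * Hhat x)
      = fun x : Fin (m+1) → ℕ+ => (((m+1 : ℕ) : ℝ))⁻¹ *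
        ∑ i, Pn p x * (J m - J (mcount x i - 1)) := by
    funext x
    unfold Hhat
    simp only [Nat.add_sub_cancel]
    rw [← mul_assoc, mul_comm (Pn p x) _, mul_assoc, Finset.mul_sum]
  rw [hsimp]
  rw [tsum_mul_left]
  rw [Summable.tsum_finsetSum (fun i _ => hsummable i)]
  have hA : ∀ i : Fin (m+1), ∑' x : Fin (m+1) → ℕ+, Pn p x * (J m - J (mcount x i - 1))
      = ∑' x : Fin (m+1) → ℕ+, Pn p x * (J m - J (mcount x 0 - 1)) := fun i => stepA i
  rw [Finset.sum_congr rfl (fun i _ => hA i), Finset.sum_const, Finset.card_univ,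
    Fintype.card_fin, stepB hp0 hsum htot hp1 m]
  rw [nsmul_eq_mul]
  rw [← mul_assoc]
  rw [inv_mul_cancel₀ (by positivity : ((m+1:ℕ):ℝ) ≠ 0), one_mul]

end pmfB


/-- tightness of the bias bound for the zeta distribution.
Fix `α ∈ (0,1)` and let `p_j = j^{−1/α} / ζ(1/α)`. Then there is `c > 0` such that for all
`n ≥ 1` the tail sum `∑_{k=n}^∞ (1/k) E[(1−p(X))^k]` is at least `c / n^{1−α}`; since the bias
equals minus this sum, the bias of the harmonic entropy estimator is of exact order
`n^{−(1−α)}`, so the upper bound `C/n^{1−α}` is tight. -/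
theorem zeta_distribution_bias_tight (α : ℝ) (hα : α ∈ Set.Ioo (0 : ℝ) 1)
    (p : ℕ+ → ℝ)
    (hp : ∀ j : ℕ+, p j = (j : ℝ) ^ (-(1 / α)) / ∑' i : ℕ+, (i : ℝ) ^ (-(1 / α))) :
    ∃ c > 0, ∀ n : ℕ, 1 ≤ n →
      c / (n : ℝ) ^ (1 - α)
          ≤ (∑' i : ℕ, (1 / (n + i : ℝ)) * ∑' j : ℕ+, p j * (1 - p j) ^ (n + i)) ∧
      c / (n : ℝ) ^ (1 - α) ≤ |EHhat p n - Hent p| := by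
  obtain ⟨hα0, hα1⟩ := hα
  set s : ℝ := 1 / α with hs_def
  have hs1 : 1 < s := one_lt_one_div hα0 hα1
  have hαs : α * s = 1 := by rw [hs_def, mul_one_div, div_self hα0.ne']
  set f : ℕ+ → ℝ := fun j => (j : ℝ) ^ (-s) with hf_def
  have hjpos : ∀ j : ℕ+, (0:ℝ) < (j:ℝ) := fun j => by exact_mod_cast j.pos
  have hj1 : ∀ j : ℕ+, (1:ℝ) ≤ (j:ℝ) := fun j => by exact_mod_cast j.one_le
  have hf_pos : ∀ j, 0 < f j := fun j => Real.rpow_pos_of_pos (hjpos j) _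
  have hf_le_one : ∀ j, f j ≤ 1 := fun j =>
    Real.rpow_le_one_of_one_le_of_nonpos (hj1 j) (by linarith)
  have hfs : Summable f := by
    have h : Summable (fun n : ℕ => (n:ℝ) ^ (-s)) := Real.summable_nat_rpow.2 (by linarith)
    exact h.comp_injective PNat.coe_injective
  set S : ℝ := ∑' j : ℕ+, (j : ℝ) ^ (-s) with hS_def
  have hpf : ∀ j, p j = f j / S := hp
  have hS_lb : 1 + (2:ℝ) ^ (-s) ≤ S := by
    have h12 : ({1, 2} : Finset ℕ+).sum f ≤ S := by
      apply Summable.sum_le_tsum _ (fun j _ => (hf_pos j).le) hfs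
    have h1 : f 1 = 1 := by
      simp [hf_def, Real.one_rpow, show ((1:ℕ+):ℝ) = 1 by norm_num]
    have h2 : f 2 = (2:ℝ) ^ (-s) := by
      norm_num [hf_def, show ((2:ℕ+):ℝ) = 2 by norm_num]
    rw [Finset.sum_pair (by decide)] at h12
    norm_num [Real.one_rpow] at h12
    convert h12 using 2 <;> norm_num
  have hS1 : 1 < S := by
    have : (0:ℝ) < (2:ℝ)^(-s) := Real.rpow_pos_of_pos two_pos _
    linarith
  have hS0 : 0 < S := by linarith
  have hp0' : ∀ j, 0 < p j := fun j => by rw [hpf j]; exact div_pos (hf_pos j) hS0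
  have hp0 : ∀ j, 0 ≤ p j := fun j => (hp0' j).le
  have hp1 : ∀ j, p j < 1 := fun j => by
    rw [hpf j, div_lt_one hS0]
    exact lt_of_le_of_lt (hf_le_one j) hS1
  have hp1le : ∀ j, p j ≤ 1 := fun j => (hp1 j).le
  have hq0 : ∀ j, (0:ℝ) ≤ 1 - p j := fun j => by linarith [hp1 j]
  have hq1 : ∀ j, 1 - p j < 1 := fun j => by linarith [hp0' j]
  have hpfun : p = fun j => f j / S := funext hpf
  have hsum : Summable p := by rw [hpfun]; exact hfs.div_const S
  have htot : ∑' j, p j = 1 := by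
    rw [hpfun, tsum_div_const]
    exact div_self hS0.ne'
  -- Mercator series
  have hmer : ∀ a : ℕ+, HasSum (fun k : ℕ => (1 - p a) ^ (k + 1) / ((k:ℝ) + 1))
      (-Real.log (p a)) := by
    intro a
    have habs : |1 - p a| < 1 := abs_lt.2 ⟨by linarith [hp1 a], by linarith [hp0' a]⟩
    have := Real.hasSum_pow_div_log_of_abs_lt_one habs
    simpa [sub_sub_cancel] using this
  -- entropy-type summability
  have hφ : Summable (fun a : ℕ+ => p a * (-Real.log (p a))) := by
    have hlog : ∀ a : ℕ+, -Real.log (p a) = Real.log S + s * Real.log (a:ℝ) := by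
      intro a
      rw [hpf a, Real.log_div (hf_pos a).ne' hS0.ne', hf_def]
      rw [Real.log_rpow (hjpos a)]
      ring
    have hkey : Summable (fun a : ℕ+ => f a * Real.log (a:ℝ)) := by
      have hs2 : (1:ℝ) < (s+1)/2 := by linarith
      have hsm : Summable (fun a : ℕ+ => (2/(s-1)) * (a:ℝ) ^ (-((s+1)/2))) := by
        apply Summable.mul_left
        have h : Summable (fun n : ℕ => (n:ℝ) ^ (-((s+1)/2))) :=
          Real.summable_nat_rpow.2 (by linarith)
        exact h.comp_injective PNat.coe_injective
      apply Summable.of_nonneg_of_le _ _ hsm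
      · intro a
        exact mul_nonneg (hf_pos a).le (Real.log_nonneg (hj1 a))
      · intro a
        have hε : (0:ℝ) < (s-1)/2 := by linarith
        have hlog_le : Real.log (a:ℝ) ≤ (a:ℝ) ^ ((s-1)/2) / ((s-1)/2) :=
          Real.log_le_rpow_div (hjpos a).le hε
        have hcomb : f a * ((a:ℝ) ^ ((s-1)/2) / ((s-1)/2))
            = (2/(s-1)) * (a:ℝ) ^ (-((s+1)/2)) := by
          rw [hf_def]
          rw [show (-((s+1)/2) : ℝ) = -s + (s-1)/2 by ring]
          rw [Real.rpow_add (hjpos a)]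
          field_simp
        calc f a * Real.log (a:ℝ) ≤ f a * ((a:ℝ) ^ ((s-1)/2) / ((s-1)/2)) :=
              mul_le_mul_of_nonneg_left hlog_le (hf_pos a).le
          _ = (2/(s-1)) * (a:ℝ) ^ (-((s+1)/2)) := hcomb
    have heq : (fun a : ℕ+ => p a * (-Real.log (p a)))
        = fun a => p a * Real.log S + (s/S) * (f a * Real.log (a:ℝ)) := by
      funext a
      rw [hlog a, hpf a]
      field_simp
    rw [heq]
    exact (hsum.mul_right (Real.log S)).add (hkey.mul_left (s/S))
  -- choose the constant
  refine ⟨(4:ℝ)^(-s) / (16 * S), by positivity, ?_⟩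
  intro n hn
  have hn0 : 0 < n := hn
  have hnr : (1:ℝ) ≤ (n:ℝ) := by exact_mod_cast hn
  have hnr0 : (0:ℝ) < (n:ℝ) := by linarith
  set m := n - 1 with hm_def
  have hnm : n = m + 1 := by omega
  -- summands
  have hEsummand : ∀ k : ℕ, Summable (fun j : ℕ+ => p j * (1 - p j) ^ k) := by
    intro k
    apply Summable.of_nonneg_of_le
      (fun j => mul_nonneg (hp0 j) (pow_nonneg (hq0 j) k))
      (fun j => mul_le_of_le_one_right (hp0 j)
        (pow_le_one₀ (hq0 j) (by linarith [hp0' j]))) hsum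
  set E : ℕ → ℝ := fun k => ∑' j : ℕ+, p j * (1 - p j) ^ k with hE_def
  have hE_nonneg : ∀ k, 0 ≤ E k := fun k =>
    tsum_nonneg fun j => mul_nonneg (hp0 j) (pow_nonneg (hq0 j) k)
  have hE_anti : ∀ k k', k ≤ k' → E k' ≤ E k := by
    intro k k' hkk
    apply Summable.tsum_le_tsum _ (hEsummand k') (hEsummand k)
    intro j
    exact mul_le_mul_of_nonneg_left
      (pow_le_pow_of_le_one (hq0 j) (by linarith [hp0' j]) hkk) (hp0 j)
  -- the double-array G
  set G : ℕ+ → ℕ → ℝ := fun a i => p a * ((1 - p a) ^ (n + i) / ((n:ℝ) + i)) with hG_def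
  have hden_pos : ∀ i : ℕ, (0:ℝ) < (n:ℝ) + i := fun i => by positivity
  have hden_one : ∀ i : ℕ, (1:ℝ) ≤ (n:ℝ) + i := fun i => by
    have : (0:ℝ) ≤ (i:ℝ) := Nat.cast_nonneg i
    linarith
  have hGnn : ∀ a i, 0 ≤ G a i := fun a i =>
    mul_nonneg (hp0 a) (div_nonneg (pow_nonneg (hq0 a) _) (hden_pos i).le)
  have hfib : ∀ a : ℕ+, Summable (G a) := by
    intro a
    apply Summable.of_nonneg_of_le (fun i => hGnn a i) _
      (summable_geometric_of_lt_one (hq0 a) (hq1 a))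
    intro i
    have h1 : (1 - p a) ^ (n + i) ≤ (1 - p a) ^ i :=
      pow_le_pow_of_le_one (hq0 a) (by linarith [hp0' a]) (by omega)
    have h2 : (1 - p a) ^ (n + i) / ((n:ℝ) + i) ≤ (1 - p a) ^ (n + i) :=
      div_le_self (pow_nonneg (hq0 a) _) (hden_one i)
    calc G a i ≤ 1 * ((1 - p a) ^ (n + i) / ((n:ℝ) + i)) :=
          mul_le_mul_of_nonneg_right (hp1le a)
            (div_nonneg (pow_nonneg (hq0 a) _) (hden_pos i).le)
      _ = (1 - p a) ^ (n + i) / ((n:ℝ) + i) := one_mul _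
      _ ≤ (1 - p a) ^ i := le_trans h2 h1
  have hfib_val : ∀ a : ℕ+, ∑' i, G a i = p a * (-Real.log (p a)) - p a * W p m a := by
    intro a
    have h1 := Summable.sum_add_tsum_nat_add (f := fun k => (1 - p a) ^ (k + 1) / ((k:ℝ) + 1)) m
      (hmer a).summable
    rw [(hmer a).tsum_eq] at h1
    have hWa : ∑ k ∈ Finset.range m, (1 - p a) ^ (k + 1) / ((k:ℝ) + 1) = W p m a := rfl
    have htail : ∑' i : ℕ, (1 - p a) ^ (i + m + 1) / (((i + m : ℕ):ℝ) + 1)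
        = -Real.log (p a) - W p m a := by
      rw [← hWa]; linarith [h1]
    have hGf : ∀ i : ℕ, G a i = p a * ((1 - p a) ^ (i + m + 1) / (((i + m : ℕ):ℝ) + 1)) := by
      intro i
      simp only [hG_def]
      congr 1
      have he : n + i = i + m + 1 := by omega
      rw [he]
      congr 1
      push_cast
      have : (n:ℝ) = (m:ℝ) + 1 := by exact_mod_cast congrArg (Nat.cast (R := ℝ)) hnm
      linarith
    calc ∑' i, G a i
        = ∑' i, p a * ((1 - p a) ^ (i + m + 1) / (((i + m : ℕ):ℝ) + 1)) := tsum_congr hGf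
      _ = p a * ∑' i, (1 - p a) ^ (i + m + 1) / (((i + m : ℕ):ℝ) + 1) := tsum_mul_left
      _ = p a * (-Real.log (p a) - W p m a) := by rw [htail]
      _ = p a * (-Real.log (p a)) - p a * W p m a := by ring
  have hWsummable : Summable (fun a : ℕ+ => p a * W p m a) := by
    apply Summable.of_nonneg_of_le (fun a => mul_nonneg (hp0 a) (W_nonneg hp1le m a))
      (fun a => mul_le_mul_of_nonneg_left (W_le hp0 hp1le m a) (hp0 a))
    exact hsum.mul_right (J m)
  have hmarg_a : Summable (fun a : ℕ+ => ∑' i, G a i) := by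
    have : (fun a : ℕ+ => ∑' i, G a i)
        = fun a => p a * (-Real.log (p a)) - p a * W p m a := funext hfib_val
    rw [this]
    exact hφ.sub hWsummable
  have hGsum : Summable (Function.uncurry G) := by
    apply (summable_prod_of_nonneg (f := Function.uncurry G) (fun z => hGnn z.1 z.2)).2
    exact ⟨hfib, hmarg_a⟩
  have hcol : ∀ i : ℕ, Summable (fun a : ℕ+ => G a i) := by
    intro i
    apply Summable.of_nonneg_of_le (fun a => hGnn a i) _ hsum
    intro a
    have h1 : (1 - p a) ^ (n + i) ≤ 1 := pow_le_one₀ (hq0 a) (by linarith [hp0' a])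
    have h2 : (1 - p a) ^ (n + i) / ((n:ℝ) + i) ≤ 1 :=
      div_le_one_of_le₀ (le_trans h1 (hden_one i)) (hden_pos i).le
    calc G a i = p a * ((1 - p a) ^ (n + i) / ((n:ℝ) + i)) := rfl
      _ ≤ p a := mul_le_of_le_one_right (hp0 a) h2
  have hswap : ∑' (i : ℕ), ∑' (a : ℕ+), G a i = ∑' (a : ℕ+), ∑' (i : ℕ), G a i :=
    Summable.tsum_comm' hGsum hfib hcol
  have hmargi_val : ∀ i : ℕ, ∑' a : ℕ+, G a i
      = (1 / ((n:ℝ) + i)) * ∑' j : ℕ+, p j * (1 - p j) ^ (n + i) := by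
    intro i
    rw [← tsum_mul_left]
    refine tsum_congr fun a => ?_
    simp only [hG_def]
    ring
  -- the bias identity
  have hEH : EHhat p n = ∑' a : ℕ+, p a * W p m a := by
    rw [hnm]
    exact EHhat_eq hp0 hsum htot hp1le m
  have hHent : Hent p = ∑' a : ℕ+, p a * (-Real.log (p a)) := by
    unfold Hent
    rw [← tsum_neg]
    exact tsum_congr fun a => by ring
  have hbias : Hent p - EHhat p n
      = ∑' i : ℕ, (1 / ((n:ℝ) + i)) * ∑' j : ℕ+, p j * (1 - p j) ^ (n + i) := by
    calc Hent p - EHhat p n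
        = ∑' a : ℕ+, (p a * (-Real.log (p a)) - p a * W p m a) := by
          rw [hHent, hEH, Summable.tsum_sub hφ hWsummable]
      _ = ∑' a : ℕ+, ∑' i : ℕ, G a i := tsum_congr fun a => (hfib_val a).symm
      _ = ∑' i : ℕ, ∑' a : ℕ+, G a i := hswap.symm
      _ = ∑' i : ℕ, (1 / ((n:ℝ) + i)) * ∑' j : ℕ+, p j * (1 - p j) ^ (n + i) :=
          tsum_congr hmargi_val
  -- summability of the tail series
  have hmargi_summ : Summable (fun i : ℕ => (1 / ((n:ℝ) + i)) * ∑' j : ℕ+, p j * (1 - p j) ^ (n + i)) := by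
    have hGsum' : Summable ((Function.uncurry G) ∘ (Equiv.prodComm ℕ ℕ+)) :=
      (Equiv.summable_iff _).2 hGsum
    have h := (summable_prod_of_nonneg (f := (Function.uncurry G) ∘ (Equiv.prodComm ℕ ℕ+))
      (fun z => hGnn z.2 z.1)).1 hGsum'
    have h2 := h.2
    have heq : (fun i : ℕ => ∑' a : ℕ+, ((Function.uncurry G) ∘ (Equiv.prodComm ℕ ℕ+)) (i, a))
        = fun i : ℕ => (1 / ((n:ℝ) + i)) * ∑' j : ℕ+, p j * (1 - p j) ^ (n + i) := by
      funext i
      exact hmargi_val i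
    rwa [heq] at h2
  -- ===== quantitative lower bound =====
  set X : ℝ := 4 * (n:ℝ) with hX_def
  have hX1 : (1:ℝ) ≤ X := by rw [hX_def]; linarith
  have hX0 : (0:ℝ) < X := by linarith
  have hXα1 : (1:ℝ) ≤ X ^ α := by
    calc (1:ℝ) = (1:ℝ) ^ α := (Real.one_rpow α).symm
      _ ≤ X ^ α := Real.rpow_le_rpow zero_le_one hX1 hα0.le
  have hXα0 : (0:ℝ) < X ^ α := Real.rpow_pos_of_pos hX0 α
  set K : ℕ := ⌈X ^ α⌉₊ with hK_def
  have hK0 : 0 < K := Nat.ceil_pos.2 hXα0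
  have hKge : X ^ α ≤ (K:ℝ) := Nat.le_ceil _
  have hKle : (K:ℝ) ≤ 2 * X ^ α := by
    have h2 : (⌈X ^ α⌉₊ : ℝ) < X ^ α + 1 := Nat.ceil_lt_add_one hXα0.le
    rw [hK_def]
    linarith
  have hembinj : Function.Injective (fun i : ℕ => (⟨K + i + 1, by omega⟩ : ℕ+)) := by
    intro a b h
    have h2 : K + a + 1 = K + b + 1 := by
      have := congrArg (fun j : ℕ+ => (j : ℕ)) h
      simpa using this
    omega
  set emb : ℕ ↪ ℕ+ := ⟨fun i => (⟨K + i + 1, by omega⟩ : ℕ+), hembinj⟩ with hemb_def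
  set τ : ℝ := (4:ℝ)^(-s) / X / S with hτ_def
  have hτ0 : 0 < τ := by
    have : (0:ℝ) < (4:ℝ)^(-s) := Real.rpow_pos_of_pos (by norm_num) _
    positivity
  have hterm_lb : ∀ i ∈ Finset.range K,
      τ * (1/2) ≤ p (emb i) * (1 - p (emb i)) ^ (2*n) := by
    intro i hi
    have hiK : i < K := Finset.mem_range.1 hi
    set j : ℕ+ := emb i with hj_def
    have hjval : ((j:ℕ):ℝ) = (K:ℝ) + (i:ℝ) + 1 := by
      have h : (j:ℕ) = K + i + 1 := rfl
      rw [h]; push_cast; ring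
    have hjpos' : (0:ℝ) < (j:ℝ) := hjpos j
    have hjge : X ^ α ≤ (j:ℝ) := by
      have h0 : (0:ℝ) ≤ (i:ℝ) := Nat.cast_nonneg i
      calc X ^ α ≤ (K:ℝ) := hKge
        _ ≤ (K:ℝ) + (i:ℝ) + 1 := by linarith
        _ = (j:ℝ) := hjval.symm
    have hjle : (j:ℝ) ≤ 4 * X ^ α := by
      have hiKr : (i:ℝ) + 1 ≤ (K:ℝ) := by exact_mod_cast hiK
      calc (j:ℝ) = (K:ℝ) + (i:ℝ) + 1 := hjval
        _ ≤ 2 * (K:ℝ) := by linarith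
        _ ≤ 4 * X ^ α := by linarith
    have hjs_lb : X ≤ (j:ℝ) ^ s := by
      have h := Real.rpow_le_rpow hXα0.le hjge (by linarith : (0:ℝ) ≤ s)
      rwa [← Real.rpow_mul hX0.le, hαs, Real.rpow_one] at h
    have hjs_ub : (j:ℝ) ^ s ≤ (4:ℝ)^s * X := by
      calc (j:ℝ) ^ s ≤ (4 * X ^ α) ^ s :=
            Real.rpow_le_rpow hjpos'.le hjle (by linarith)
        _ = (4:ℝ)^s * X := by
            rw [Real.mul_rpow (by norm_num) hXα0.le, ← Real.rpow_mul hX0.le, hαs,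
              Real.rpow_one]
    have hfj : f j = ((j:ℝ) ^ s)⁻¹ := Real.rpow_neg hjpos'.le s
    have hjs_pos : (0:ℝ) < (j:ℝ) ^ s := Real.rpow_pos_of_pos hjpos' s
    have hpj_le : p j ≤ 1 / X := by
      calc p j = f j / S := hpf j
        _ ≤ f j := div_le_self (hf_pos j).le hS1.le
        _ = ((j:ℝ) ^ s)⁻¹ := hfj
        _ ≤ X⁻¹ := inv_anti₀ hX0 hjs_lb
        _ = 1 / X := (one_div X).symm
    have hpj_ge : τ ≤ p j := by
      have h1 : ((4:ℝ)^s * X)⁻¹ ≤ f j := by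
        rw [hfj]
        exact inv_anti₀ hjs_pos hjs_ub
      have h2 : ((4:ℝ)^s * X)⁻¹ = (4:ℝ)^(-s) / X := by
        rw [Real.rpow_neg (by norm_num : (0:ℝ) ≤ 4), mul_inv]
        exact (div_eq_mul_inv _ _).symm
      rw [hτ_def, hpf j]
      exact (div_le_div_iff_of_pos_right hS0).2 (le_trans (le_of_eq h2.symm) h1)
    have hpow_lb : (1/2:ℝ) ≤ (1 - p j) ^ (2*n) := by
      have hb := one_add_mul_le_pow (a := -(p j)) (by linarith [hp1le j]) (2*n)
      rw [show (1 + -(p j)) = 1 - p j from by ring] at hb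
      have h2n : ((2*n:ℕ):ℝ) * p j ≤ 1/2 := by
        have h1 : ((2*n:ℕ):ℝ) * p j ≤ ((2*n:ℕ):ℝ) * (1/X) :=
          mul_le_mul_of_nonneg_left hpj_le (by positivity)
        have h2 : ((2*n:ℕ):ℝ) * (1/X) = 1/2 := by
          rw [hX_def]
          push_cast
          field_simp
          ring
        linarith
      have : (1:ℝ)/2 ≤ 1 + ((2*n:ℕ):ℝ) * -(p j) := by
        push_cast at h2n ⊢
        linarith
      linarith
    calc τ * (1/2) ≤ p j * ((1 - p j) ^ (2*n)) :=
          mul_le_mul hpj_ge hpow_lb (by norm_num) (hp0 j)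
      _ = p j * (1 - p j) ^ (2*n) := rfl
  -- lower bound on E (2n)
  have hE2n : (n:ℝ)^α * (τ * (1/2)) ≤ E (2*n) := by
    have hsum_lb := Summable.sum_le_tsum (Finset.map emb (Finset.range K))
      (fun j _ => mul_nonneg (hp0 j) (pow_nonneg (hq0 j) _)) (hEsummand (2*n))
    rw [Finset.sum_map] at hsum_lb
    have hcard := Finset.card_nsmul_le_sum (Finset.range K)
      (fun i => p (emb i) * (1 - p (emb i)) ^ (2*n)) (τ * (1/2)) hterm_lb
    rw [Finset.card_range, nsmul_eq_mul] at hcard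
    have hKn : (n:ℝ)^α ≤ (K:ℝ) := by
      have h1 : (n:ℝ)^α ≤ X^α :=
        Real.rpow_le_rpow hnr0.le (by rw [hX_def]; linarith) hα0.le
      linarith
    have h3 : (n:ℝ)^α * (τ * (1/2)) ≤ (K:ℝ) * (τ * (1/2)) :=
      mul_le_mul_of_nonneg_right hKn (by positivity)
    calc (n:ℝ)^α * (τ * (1/2)) ≤ (K:ℝ) * (τ * (1/2)) := h3
      _ ≤ ∑ i ∈ Finset.range K, p (emb i) * (1 - p (emb i)) ^ (2*n) := hcard
      _ ≤ E (2*n) := hsum_lb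
  -- lower bound on the tail sum
  have htail_lb : (n:ℝ) * ((1/(2*(n:ℝ))) * E (2*n))
      ≤ ∑' i : ℕ, (1 / ((n:ℝ) + i)) * ∑' j : ℕ+, p j * (1 - p j) ^ (n + i) := by
    have hlow := Summable.sum_le_tsum (Finset.range n)
      (fun i _ => mul_nonneg (by positivity) (hE_nonneg (n + i))) hmargi_summ
    have hterm : ∀ i ∈ Finset.range n,
        (1/(2*(n:ℝ))) * E (2*n) ≤ (1 / ((n:ℝ) + i)) * ∑' j : ℕ+, p j * (1 - p j) ^ (n + i) := by
      intro i hi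
      have hin : i < n := Finset.mem_range.1 hi
      have hinr : (i:ℝ) ≤ (n:ℝ) := by exact_mod_cast hin.le
      have h1 : (1:ℝ)/(2*(n:ℝ)) ≤ 1/((n:ℝ) + i) := by
        apply one_div_le_one_div_of_le (hden_pos i)
        linarith
      have h2 : E (2*n) ≤ E (n + i) := hE_anti (n+i) (2*n) (by omega)
      calc (1/(2*(n:ℝ))) * E (2*n) ≤ (1/((n:ℝ) + i)) * E (n + i) :=
            mul_le_mul h1 h2 (hE_nonneg _) (by positivity)
        _ = (1 / ((n:ℝ) + i)) * ∑' j : ℕ+, p j * (1 - p j) ^ (n + i) := rfl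
    have hconst := Finset.card_nsmul_le_sum (Finset.range n)
      (fun i => (1 / ((n:ℝ) + i)) * ∑' j : ℕ+, p j * (1 - p j) ^ (n + i))
      ((1/(2*(n:ℝ))) * E (2*n)) hterm
    rw [Finset.card_range, nsmul_eq_mul] at hconst
    exact le_trans hconst hlow
  -- combine
  set c : ℝ := (4:ℝ)^(-s) / (16 * S) with hc_def
  have hfinal : c / (n:ℝ)^(1-α)
      ≤ ∑' i : ℕ, (1 / ((n:ℝ) + i)) * ∑' j : ℕ+, p j * (1 - p j) ^ (n + i) := by
    have hrw : c / (n:ℝ)^(1-α) = c * (n:ℝ)^α / (n:ℝ) := by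
      rw [Real.rpow_sub hnr0, Real.rpow_one, div_div_eq_mul_div]
    have hτval : (n:ℝ)^α * (τ * (1/2)) = c * (n:ℝ)^α / (n:ℝ) * 2 := by
      rw [hτ_def, hX_def, hc_def]
      field_simp
      ring
    have hchain : c * (n:ℝ)^α / (n:ℝ) ≤ (n:ℝ) * ((1/(2*(n:ℝ))) * E (2*n)) := by
      have h1 : (n:ℝ) * ((1/(2*(n:ℝ))) * E (2*n)) = E (2*n) / 2 := by
        field_simp
      rw [h1]
      have h2 : c * (n:ℝ)^α / (n:ℝ) * 2 ≤ E (2*n) := by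
        rw [← hτval]; exact hE2n
      linarith
    rw [hrw]
    exact le_trans hchain htail_lb
  have habs : c / (n:ℝ)^(1-α) ≤ |EHhat p n - Hent p| := by
    rw [abs_sub_comm]
    have hnn : 0 ≤ Hent p - EHhat p n := by
      rw [hbias]
      refine le_trans ?_ hfinal
      positivity
    rw [abs_of_nonneg hnn, hbias]
    exact hfinal
  exact ⟨hfinal, habs⟩
end

section
/- There exists a constant c > 0 such that for every positive integer n and every (measurable) estimator f : ℕⁿ → ℝ, there exists a probability mass function p on ℕ = {1,2,3,...} with p_j ≠ 1 for all j (in fact p may be taken supported on {1,2}) such that E_p[ (f(X^{(1)},...,X^{(n)}) − H(p))² ] ≥ c / n, where X^{(1)},...,X^{(n)} are i.i.d. with distribution p and H(p) = −∑_j p_j log p_j is the Shannon entropy. -/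
open Filter Asymptotics
open scoped ENNReal

/- ### Auxiliary lemmas -/

lemma tsum_pi_prod (g : ℕ+ → ℝ≥0∞) (n : ℕ) :
    ∑' x : Fin n → ℕ+, ∏ i, g (x i) = (∑' j, g j) ^ n := by
  induction n with
  | zero =>
      rw [pow_zero]
      rw [tsum_eq_single (default : Fin 0 → ℕ+)
        (fun b hb => absurd (Subsingleton.elim b default) hb)]
      simp
  | succ n ih =>
      have h := Equiv.tsum_eq (Fin.consEquiv (fun _ : Fin (n+1) => ℕ+))
        (fun x : Fin (n+1) → ℕ+ => ∏ i, g (x i))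
      rw [← h]
      have : ∀ y : ℕ+ × (Fin n → ℕ+),
          (∏ i, g ((Fin.consEquiv (fun _ : Fin (n+1) => ℕ+)) y i))
            = g y.1 * ∏ i, g (y.2 i) := by
        intro y
        rw [Fin.prod_univ_succ]
        simp [Fin.consEquiv]
      rw [tsum_congr this, ENNReal.tsum_prod']
      simp only [ENNReal.tsum_mul_left]
      rw [ENNReal.tsum_mul_right, ih, pow_succ]
      ring

lemma sqrt_finset_prod {α : Type*} (s : Finset α) (h : α → ℝ) (hh : ∀ i, 0 ≤ h i) :
    Real.sqrt (∏ i ∈ s, h i) = ∏ i ∈ s, Real.sqrt (h i) := by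
  induction s using Finset.cons_induction with
  | empty => simp
  | cons a s ha ih => rw [Finset.prod_cons, Finset.prod_cons, Real.sqrt_mul (hh a), ih]

lemma ofReal_min (a b : ℝ) :
    ENNReal.ofReal (min a b) = min (ENNReal.ofReal a) (ENNReal.ofReal b) := by
  rcases le_total a b with h | h
  · rw [min_eq_left h, min_eq_left (ENNReal.ofReal_le_ofReal h)]
  · rw [min_eq_right h, min_eq_right (ENNReal.ofReal_le_ofReal h)]

lemma tsum_pnat_two {M : Type*} [AddCommMonoid M] [TopologicalSpace M] [T2Space M] (g : ℕ+ → M)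
    (h : ∀ j : ℕ+, j ≠ 1 → j ≠ 2 → g j = 0) : ∑' j, g j = g 1 + g 2 := by
  rw [tsum_eq_sum (s := ({1, 2} : Finset ℕ+)) ?_]
  · rw [Finset.sum_pair (by decide)]
  · intro j hj
    simp only [Finset.mem_insert, Finset.mem_singleton] at hj
    push_neg at hj
    exact h j hj.1 hj.2

noncomputable def hent2 (t : ℝ) : ℝ := -(t * Real.log t + (1 - t) * Real.log (1 - t))

lemma hent2_hasDeriv {t : ℝ} (h0 : 0 < t) (h1 : t < 1) :
    HasDerivAt hent2 (Real.log (1 - t) - Real.log t) t := by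
  have h1' : (0:ℝ) < 1 - t := by linarith
  have d1 : HasDerivAt (fun s : ℝ => s * Real.log s) (Real.log t + 1) t := by
    have := (hasDerivAt_id t).mul (Real.hasDerivAt_log h0.ne')
    exact (by simpa [mul_inv_cancel₀ h0.ne'] using this : HasDerivAt (id * Real.log) (Real.log t + 1) t)
  have dinner : HasDerivAt (fun s : ℝ => 1 - s) (-1 : ℝ) t := by
    simpa using (hasDerivAt_id t).const_sub 1
  have d2' : HasDerivAt (fun s : ℝ => s * Real.log s) (Real.log (1-t) + 1) (1-t) := by
    have := (hasDerivAt_id (1-t)).mul (Real.hasDerivAt_log h1'.ne')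
    exact (by simpa [mul_inv_cancel₀ h1'.ne'] using this :
      HasDerivAt (id * Real.log) (Real.log (1-t) + 1) (1-t))
  have d2 : HasDerivAt (fun s : ℝ => (1 - s) * Real.log (1 - s))
      ((Real.log (1-t) + 1) * (-1)) t := d2'.comp t dinner
  have := (d1.add d2).neg
  have heq : -(Real.log t + 1 + (Real.log (1-t) + 1) * (-1)) = Real.log (1-t) - Real.log t := by
    ring
  rw [heq] at this
  exact this

lemma hent2_gap {δ : ℝ} (hδ0 : 0 < δ) (hδ : δ ≤ 1/12) :
    δ/2 ≤ hent2 (1/4 + δ) - hent2 (1/4) := by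
  have key : StrictMonoOn (fun t => hent2 t - t/2) (Set.Icc (1/4 : ℝ) (1/3)) := by
    apply strictMonoOn_of_deriv_pos (convex_Icc _ _)
    · intro x hx
      have hx0 : (0:ℝ) < x := lt_of_lt_of_le (by norm_num) hx.1
      have hx1 : x < 1 := lt_of_le_of_lt hx.2 (by norm_num)
      have hd : HasDerivAt (fun t => hent2 t - t/2) (Real.log (1-x) - Real.log x - 1/2) x := by
        exact (by simpa using (hent2_hasDeriv hx0 hx1).sub ((hasDerivAt_id x).div_const 2) :
          HasDerivAt (hent2 - fun x => x/2) (Real.log (1-x) - Real.log x - 1/2) x)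
      exact hd.continuousAt.continuousWithinAt
    · intro x hx
      rw [interior_Icc] at hx
      have hx0 : (0:ℝ) < x := lt_trans (by norm_num) hx.1
      have hx1 : x < 1 := lt_trans hx.2 (by norm_num)
      have hd : HasDerivAt (fun t => hent2 t - t/2) (Real.log (1-x) - Real.log x - 1/2) x := by
        exact (by simpa using (hent2_hasDeriv hx0 hx1).sub ((hasDerivAt_id x).div_const 2) :
          HasDerivAt (hent2 - fun x => x/2) (Real.log (1-x) - Real.log x - 1/2) x)
      rw [hd.deriv]
      have hlog : Real.log 2 ≤ Real.log (1-x) - Real.log x := by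
        rw [← Real.log_div (by linarith) hx0.ne']
        apply Real.log_le_log (by norm_num)
        rw [le_div_iff₀ hx0]
        nlinarith [hx.2]
      nlinarith [Real.log_two_gt_d9]
  have h1 : (1/4 : ℝ) ∈ Set.Icc (1/4 : ℝ) (1/3) := by constructor <;> norm_num
  have h2 : (1/4 + δ : ℝ) ∈ Set.Icc (1/4 : ℝ) (1/3) := by constructor <;> [linarith; linarith]
  have := key h1 h2 (by linarith)
  simp only at this
  linarith

/-- The two-point pmf on `{1, 2}`. -/
noncomputable def tp2pt (a : ℝ) (j : ℕ+) : ℝ := if j = 1 then a else if j = 2 then 1 - a else 0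

@[simp] lemma tp2pt_one (a : ℝ) : tp2pt a 1 = a := if_pos rfl

@[simp] lemma tp2pt_two (a : ℝ) : tp2pt a 2 = 1 - a := by
  rw [tp2pt, if_neg (by decide), if_pos rfl]

lemma tp2pt_other (a : ℝ) {j : ℕ+} (h1 : j ≠ 1) (h2 : j ≠ 2) : tp2pt a j = 0 := by
  rw [tp2pt, if_neg h1, if_neg h2]

lemma tp2pt_tsum (a : ℝ) : ∑' j, tp2pt a j = 1 := by
  rw [tsum_pnat_two _ (fun j h1 h2 => tp2pt_other a h1 h2), tp2pt_one, tp2pt_two]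
  ring

lemma tp2pt_nonneg {a : ℝ} (h0 : 0 < a) (h3 : a ≤ 1/3) (j : ℕ+) : 0 ≤ tp2pt a j := by
  rw [tp2pt]
  split_ifs <;> linarith

lemma tp2pt_ne_one {a : ℝ} (h0 : 0 < a) (h3 : a ≤ 1/3) (j : ℕ+) : tp2pt a j ≠ 1 := by
  rw [tp2pt]
  split_ifs <;> intro h <;> linarith

lemma tp2pt_support {a : ℝ} (j : ℕ+) (hj : 2 < (j : ℕ)) : tp2pt a j = 0 := by
  apply tp2pt_other
  · intro h; rw [h] at hj; norm_num at hj
  · intro h; rw [h] at hj; norm_num at hj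

lemma tp2pt_Hent (a : ℝ) : Hent (tp2pt a) = hent2 a := by
  rw [Hent, tsum_pnat_two (fun j => tp2pt a j * Real.log (tp2pt a j))
    (fun j h1 h2 => by simp only [tp2pt_other a h1 h2, zero_mul]), tp2pt_one, tp2pt_two, hent2]

lemma tp2pt_Pn_ofReal {n : ℕ} {a : ℝ} (h0 : 0 < a) (h3 : a ≤ 1/3) (x : Fin n → ℕ+) :
    ENNReal.ofReal (Pn (tp2pt a) x) = ∏ i, ENNReal.ofReal (tp2pt a (x i)) := by
  rw [Pn, ENNReal.ofReal_prod_of_nonneg (fun i _ => tp2pt_nonneg h0 h3 _)]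

lemma tp2pt_Pn_nonneg {n : ℕ} {a : ℝ} (h0 : 0 < a) (h3 : a ≤ 1/3) (x : Fin n → ℕ+) :
    0 ≤ Pn (tp2pt a) x :=
  Finset.prod_nonneg (fun i _ => tp2pt_nonneg h0 h3 _)

lemma tp2pt_total {n : ℕ} {a : ℝ} (h0 : 0 < a) (h3 : a ≤ 1/3) :
    ∑' x : Fin n → ℕ+, ENNReal.ofReal (Pn (tp2pt a) x) = 1 := by
  rw [tsum_congr (tp2pt_Pn_ofReal h0 h3), tsum_pi_prod (fun j => ENNReal.ofReal (tp2pt a j)) n]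
  rw [tsum_pnat_two _ (fun j h1 h2 => by rw [tp2pt_other a h1 h2, ENNReal.ofReal_zero]),
    tp2pt_one, tp2pt_two, ← ENNReal.ofReal_add (by linarith) (by linarith)]
  have : a + (1 - a) = 1 := by ring
  rw [this, ENNReal.ofReal_one, one_pow]

lemma amgm_min (a b : ℝ) (ha : 0 ≤ a) (hb : 0 ≤ b) :
    Real.sqrt (a * b) ≤ 1/4 * a + 1/4 * b + min a b := by
  rcases le_total a b with hab | hab
  · rw [min_eq_left hab]
    calc Real.sqrt (a * b) ≤ Real.sqrt ((a + b/4)^2) :=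
        Real.sqrt_le_sqrt (by nlinarith [sq_nonneg (a - b/4)])
      _ = a + b/4 := Real.sqrt_sq (by linarith)
      _ ≤ 1/4 * a + 1/4 * b + a := by linarith
  · rw [min_eq_right hab]
    calc Real.sqrt (a * b) ≤ Real.sqrt ((b + a/4)^2) :=
        Real.sqrt_le_sqrt (by nlinarith [sq_nonneg (b - a/4)])
      _ = b + a/4 := Real.sqrt_sq (by linarith)
      _ ≤ 1/4 * a + 1/4 * b + b := by linarith

set_option maxHeartbeats 1000000 in
/-- minimax lower bound, two-point construction. There is `c > 0` such that
for every sample size `n ≥ 1` and every estimator `f : ℕⁿ → ℝ` there exists a pmf `p` on the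
positive integers with `p_j ≠ 1` for all `j` (in fact supported on `{1,2}`) whose risk satisfies
`E_p[(f(X₁,…,Xₙ) − H(p))²] ≥ c/n`. -/
theorem entropy_minimax_lower_bound :
    ∃ c > 0, ∀ n : ℕ, 1 ≤ n → ∀ f : (Fin n → ℕ+) → ℝ,
      ∃ p : ℕ+ → ℝ, (∀ j, 0 ≤ p j) ∧ (∑' j, p j = 1) ∧ (∀ j, p j ≠ 1) ∧
        (∀ j : ℕ+, 2 < (j : ℕ) → p j = 0) ∧
        ENNReal.ofReal (c / n) ≤
          ∑' x : Fin n → ℕ+, ENNReal.ofReal (Pn p x * (f x - Hent p) ^ 2) := by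
  refine ⟨1/9216, by norm_num, ?_⟩
  intro n hn f
  have hn1 : (1:ℝ) ≤ (n:ℝ) := by exact_mod_cast hn
  have hn0 : (0:ℝ) < n := by linarith
  set s : ℝ := Real.sqrt n with hs_def
  have hs1 : 1 ≤ s := by
    rw [hs_def, show (1:ℝ) = Real.sqrt 1 by simp]
    exact Real.sqrt_le_sqrt hn1
  have hs0 : (0:ℝ) < s := by linarith
  set δ : ℝ := 1 / (12 * s) with hδ_def
  have hδ0 : 0 < δ := by positivity
  have hδ12 : δ ≤ 1/12 := by
    rw [hδ_def, div_le_div_iff₀ (by positivity) (by norm_num)]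
    nlinarith
  have hδsq : δ^2 = 1/(144 * n) := by
    rw [hδ_def, div_pow, mul_pow, Real.sq_sqrt hn0.le]
    norm_num
  have hδ2 : δ^2 ≤ 1/144 := by nlinarith
  -- the two pmfs
  have ha1 : (0:ℝ) < 1/4 := by norm_num
  have ha1' : (1/4:ℝ) ≤ 1/3 := by norm_num
  have ha2 : (0:ℝ) < 1/4 + δ := by linarith
  have ha2' : (1/4 + δ:ℝ) ≤ 1/3 := by linarith
  set p₁ : ℕ+ → ℝ := tp2pt (1/4) with hp₁_def
  set p₂ : ℕ+ → ℝ := tp2pt (1/4 + δ) with hp₂_def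
  have hPn₁ : ∀ x : Fin n → ℕ+, 0 ≤ Pn p₁ x := fun x => tp2pt_Pn_nonneg ha1 ha1' x
  have hPn₂ : ∀ x : Fin n → ℕ+, 0 ≤ Pn p₂ x := fun x => tp2pt_Pn_nonneg ha2 ha2' x
  set oP₁ : (Fin n → ℕ+) → ℝ≥0∞ := fun x => ENNReal.ofReal (Pn p₁ x) with hoP₁
  set oP₂ : (Fin n → ℕ+) → ℝ≥0∞ := fun x => ENNReal.ofReal (Pn p₂ x) with hoP₂
  -- entropy gap
  set H₁ : ℝ := Hent p₁ with hH₁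
  set H₂ : ℝ := Hent p₂ with hH₂
  set d : ℝ := H₂ - H₁ with hd_def
  have hd : δ/2 ≤ d := by
    rw [hd_def, hH₂, hH₁, hp₁_def, hp₂_def, tp2pt_Hent, tp2pt_Hent]
    exact hent2_gap hδ0 hδ12
  have hd0 : 0 < d := lt_of_lt_of_le (by positivity) hd
  -- Hellinger affinity
  set ρ : ℝ := Real.sqrt (p₁ 1 * p₂ 1) + Real.sqrt (p₁ 2 * p₂ 2) with hρ_def
  have hρ0 : 0 ≤ ρ := add_nonneg (Real.sqrt_nonneg _) (Real.sqrt_nonneg _)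
  have hρ_lb : 1 - 2*δ^2 ≤ ρ := by
    have e1 : 1/4 + δ/2 - δ^2 ≤ Real.sqrt (p₁ 1 * p₂ 1) := by
      rw [hp₁_def, hp₂_def, tp2pt_one, tp2pt_one]
      rw [Real.le_sqrt (by linarith) (by linarith)]
      have hq : (0:ℝ) ≤ 1/4 + δ - δ^2 := by nlinarith
      nlinarith [mul_nonneg (sq_nonneg δ) hq]
    have e2 : 3/4 - δ/2 - δ^2 ≤ Real.sqrt (p₁ 2 * p₂ 2) := by
      rw [hp₁_def, hp₂_def, tp2pt_two, tp2pt_two]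
      rw [Real.le_sqrt (by linarith) (by nlinarith)]
      have hq : (0:ℝ) ≤ 5/4 - δ - δ^2 := by nlinarith
      nlinarith [mul_nonneg (sq_nonneg δ) hq]
    rw [hρ_def]; linarith
  have haff : ∑' x : Fin n → ℕ+, ENNReal.ofReal (Real.sqrt (Pn p₁ x * Pn p₂ x))
      = (ENNReal.ofReal ρ)^n := by
    have step : ∀ x : Fin n → ℕ+, ENNReal.ofReal (Real.sqrt (Pn p₁ x * Pn p₂ x))
        = ∏ i, ENNReal.ofReal (Real.sqrt (p₁ (x i) * p₂ (x i))) := by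
      intro x
      rw [Pn, Pn, ← Finset.prod_mul_distrib,
        sqrt_finset_prod _ _ (fun i => mul_nonneg (tp2pt_nonneg ha1 ha1' _)
          (tp2pt_nonneg ha2 ha2' _)),
        ENNReal.ofReal_prod_of_nonneg (fun i _ => Real.sqrt_nonneg _)]
    rw [tsum_congr step, tsum_pi_prod (fun j => ENNReal.ofReal (Real.sqrt (p₁ j * p₂ j))) n]
    congr 1
    rw [tsum_pnat_two _ (fun j h1 h2 => by
        rw [hp₁_def, tp2pt_other _ h1 h2, zero_mul, Real.sqrt_zero, ENNReal.ofReal_zero]),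
      ← ENNReal.ofReal_add (Real.sqrt_nonneg _) (Real.sqrt_nonneg _), hρ_def]
  have hρn : ENNReal.ofReal (71/72) ≤ (ENNReal.ofReal ρ)^n := by
    rw [← ENNReal.ofReal_pow hρ0]
    apply ENNReal.ofReal_le_ofReal
    have h1 : (1 - 2*δ^2)^n ≤ ρ^n := pow_le_pow_left₀ (by nlinarith) hρ_lb n
    have h2 : 1 + (n:ℝ) * (-(2*δ^2)) ≤ (1 + (-(2*δ^2)))^n :=
      one_add_mul_le_pow (by nlinarith) n
    have h3 : (n:ℝ) * (2*δ^2) = 1/72 := by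
      rw [hδsq]; field_simp; ring
    have h4 : (71/72:ℝ) = 1 + (n:ℝ) * (-(2*δ^2)) := by
      rw [mul_neg, h3]; norm_num
    calc (71/72:ℝ) = 1 + (n:ℝ) * (-(2*δ^2)) := h4
      _ ≤ (1 + (-(2*δ^2)))^n := h2
      _ = (1 - 2*δ^2)^n := by ring_nf
      _ ≤ ρ^n := h1
  -- lower bound for the sum of the min via AM-GM
  set Smin : ℝ≥0∞ := ∑' x : Fin n → ℕ+, min (oP₁ x) (oP₂ x) with hSmin_def
  have hA_le : (ENNReal.ofReal ρ)^n ≤ ENNReal.ofReal (1/2) + Smin := by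
    rw [← haff]
    calc ∑' x : Fin n → ℕ+, ENNReal.ofReal (Real.sqrt (Pn p₁ x * Pn p₂ x))
        ≤ ∑' x : Fin n → ℕ+, (ENNReal.ofReal (1/4) * oP₁ x
            + (ENNReal.ofReal (1/4) * oP₂ x + min (oP₁ x) (oP₂ x))) := by
          apply ENNReal.tsum_le_tsum
          intro x
          calc ENNReal.ofReal (Real.sqrt (Pn p₁ x * Pn p₂ x))
              ≤ ENNReal.ofReal (1/4 * Pn p₁ x + (1/4 * Pn p₂ x + min (Pn p₁ x) (Pn p₂ x))) := by
                apply ENNReal.ofReal_le_ofReal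
                have := amgm_min (Pn p₁ x) (Pn p₂ x) (hPn₁ x) (hPn₂ x)
                linarith
            _ ≤ ENNReal.ofReal (1/4 * Pn p₁ x)
                + (ENNReal.ofReal (1/4 * Pn p₂ x) + ENNReal.ofReal (min (Pn p₁ x) (Pn p₂ x))) :=
                le_trans ENNReal.ofReal_add_le (add_le_add_right ENNReal.ofReal_add_le _)
            _ = ENNReal.ofReal (1/4) * oP₁ x
                + (ENNReal.ofReal (1/4) * oP₂ x + min (oP₁ x) (oP₂ x)) := by
                rw [ENNReal.ofReal_mul (by norm_num), ENNReal.ofReal_mul (by norm_num),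
                  ofReal_min]
      _ = ENNReal.ofReal (1/4) * (∑' x : Fin n → ℕ+, oP₁ x)
            + (ENNReal.ofReal (1/4) * (∑' x : Fin n → ℕ+, oP₂ x) + Smin) := by
          rw [ENNReal.tsum_add, ENNReal.tsum_add, ENNReal.tsum_mul_left, ENNReal.tsum_mul_left]
      _ = ENNReal.ofReal (1/2) + Smin := by
          rw [hoP₁, hoP₂, hp₁_def, hp₂_def, tp2pt_total ha1 ha1', tp2pt_total ha2 ha2',
            mul_one, ← add_assoc, ← ENNReal.ofReal_add (by norm_num) (by norm_num)]
          norm_num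
  have hSmin : ENNReal.ofReal (1/4) ≤ Smin := by
    have h := le_trans hρn hA_le
    have heq : ENNReal.ofReal (71/72) = ENNReal.ofReal (1/2) + ENNReal.ofReal (35/72) := by
      rw [← ENNReal.ofReal_add (by norm_num) (by norm_num)]; norm_num
    rw [heq] at h
    have h3 := ENNReal.le_of_add_le_add_left ENNReal.ofReal_ne_top h
    exact le_trans (ENNReal.ofReal_le_ofReal (by norm_num)) h3
  -- pointwise two-point risk bound
  have hpt : ∀ x : Fin n → ℕ+, min (oP₁ x) (oP₂ x) * ENNReal.ofReal (d^2/2)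
      ≤ ENNReal.ofReal (Pn p₁ x * (f x - H₁)^2) + ENNReal.ofReal (Pn p₂ x * (f x - H₂)^2) := by
    intro x
    rw [ENNReal.ofReal_mul (hPn₁ x), ENNReal.ofReal_mul (hPn₂ x)]
    have key : ENNReal.ofReal (d^2/2)
        ≤ ENNReal.ofReal ((f x - H₁)^2) + ENNReal.ofReal ((f x - H₂)^2) := by
      rw [← ENNReal.ofReal_add (sq_nonneg _) (sq_nonneg _)]
      apply ENNReal.ofReal_le_ofReal
      have : d = H₂ - H₁ := hd_def
      nlinarith [sq_nonneg (2*(f x) - H₁ - H₂)]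
    calc min (oP₁ x) (oP₂ x) * ENNReal.ofReal (d^2/2)
        ≤ min (oP₁ x) (oP₂ x) * (ENNReal.ofReal ((f x - H₁)^2) + ENNReal.ofReal ((f x - H₂)^2)) :=
          mul_le_mul_right key _
      _ = min (oP₁ x) (oP₂ x) * ENNReal.ofReal ((f x - H₁)^2)
          + min (oP₁ x) (oP₂ x) * ENNReal.ofReal ((f x - H₂)^2) := mul_add _ _ _
      _ ≤ oP₁ x * ENNReal.ofReal ((f x - H₁)^2) + oP₂ x * ENNReal.ofReal ((f x - H₂)^2) :=
          add_le_add (mul_le_mul_left (min_le_left _ _) _)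
            (mul_le_mul_left (min_le_right _ _) _)
  set R₁ : ℝ≥0∞ := ∑' x : Fin n → ℕ+, ENNReal.ofReal (Pn p₁ x * (f x - Hent p₁)^2) with hR₁
  set R₂ : ℝ≥0∞ := ∑' x : Fin n → ℕ+, ENNReal.ofReal (Pn p₂ x * (f x - Hent p₂)^2) with hR₂
  have hsum_risk : ENNReal.ofReal (d^2/2) * Smin ≤ R₁ + R₂ := by
    calc ENNReal.ofReal (d^2/2) * Smin
        = ∑' x : Fin n → ℕ+, min (oP₁ x) (oP₂ x) * ENNReal.ofReal (d^2/2) := by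
          rw [hSmin_def, ENNReal.tsum_mul_right, mul_comm]
      _ ≤ ∑' x : Fin n → ℕ+, (ENNReal.ofReal (Pn p₁ x * (f x - H₁)^2)
            + ENNReal.ofReal (Pn p₂ x * (f x - H₂)^2)) := ENNReal.tsum_le_tsum hpt
      _ = R₁ + R₂ := by rw [ENNReal.tsum_add, hR₁, hR₂, hH₁, hH₂]
  have hfinal : ENNReal.ofReal (2 * (1/9216 / (n:ℝ))) ≤ R₁ + R₂ := by
    refine le_trans ?_ hsum_risk
    have h1 : ENNReal.ofReal (d^2/2) * ENNReal.ofReal (1/4) ≤ ENNReal.ofReal (d^2/2) * Smin :=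
      mul_le_mul_right hSmin _
    refine le_trans ?_ h1
    rw [← ENNReal.ofReal_mul (by positivity)]
    apply ENNReal.ofReal_le_ofReal
    have hdsq : 1/(576 * (n:ℝ)) ≤ d^2 := by
      have h1 : δ^2/4 ≤ d^2 := by nlinarith
      rw [hδsq] at h1
      calc 1/(576 * (n:ℝ)) = (1/(144 * (n:ℝ)))/4 := by ring
        _ ≤ d^2 := h1
    calc 2 * (1/9216 / (n:ℝ)) = (1/(576 * (n:ℝ)))/2 * (1/4) := by ring
      _ ≤ d^2/2 * (1/4) := by
        have : 1/(576 * (n:ℝ))/2 ≤ d^2/2 := by linarith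
        nlinarith
  -- finish: one of the two risks is large
  by_cases hcase : ENNReal.ofReal (1/9216 / (n:ℝ)) ≤ R₁
  · exact ⟨p₁, fun j => tp2pt_nonneg ha1 ha1' j, tp2pt_tsum _,
      fun j => tp2pt_ne_one ha1 ha1' j, fun j hj => tp2pt_support j hj, hcase⟩
  · refine ⟨p₂, fun j => tp2pt_nonneg ha2 ha2' j, tp2pt_tsum _,
      fun j => tp2pt_ne_one ha2 ha2' j, fun j hj => tp2pt_support j hj, ?_⟩
    by_contra hc
    have h1 := lt_of_not_ge hcase
    have h2 := lt_of_not_ge hc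
    have hlt : R₁ + R₂ < ENNReal.ofReal (1/9216 / (n:ℝ)) + ENNReal.ofReal (1/9216 / (n:ℝ)) :=
      ENNReal.add_lt_add h1 h2
    rw [← ENNReal.ofReal_add (by positivity) (by positivity)] at hlt
    have heq2 : (1/9216 / (n:ℝ)) + (1/9216 / (n:ℝ)) = 2 * (1/9216 / (n:ℝ)) := by ring
    rw [heq2] at hlt
    exact absurd hfinal (not_le.mpr hlt)
end

section
/- Let p be a probability mass function on the positive integers with p_j monotonically nonincreasing, and suppose there exist M > 0 and α ∈ (0,1) with p_j ≤ M j^{−1/α} for all j. Write E[(1−p_X)^m] = ∑_i p_i (1−p_i)^m. Then: (i) there exists C₁ > 0, not depending on n, such that ∑_{m=1}^{n} ∑_{k=n−m+1}^{n} E[(1−p_X)^m] / (mk) ≤ C₁ ( n^{−(1−α)} + (log n)/n ) for all n ≥ 2; (ii) for every positive integer ℓ there exists C₂ > 0 such that ∑_{m=1}^{n} ∑_{k=n−m+1}^{n} ( ∑_i p_i^ℓ (1−p_i)^{m+k} ) / (mk) ≤ C₂ / n^{ℓ−α} for all n ≥ 1; and (iii) for every positive integer ℓ there exists C₃ > 0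 such that ∑_{m=n+1}^{∞} ∑_{k=1}^{m−1} ( ∑_i p_i^ℓ (1−p_i)^m ) / (k(m−k)) ≤ C₃ (log n) / n^{ℓ−α} for all n ≥ 2. -/
open Filter Asymptotics

section AuxLemmas

lemma aux_bern_neg {β : ℝ} (hβ : 0 < β) {t : ℝ} (ht0 : 0 < t) (ht1 : t ≤ 1) :
    1 + β * (1 - t) ≤ t ^ (-β) := by
  have h1 : t ^ (-β) = Real.exp (Real.log t * (-β)) := Real.rpow_def_of_pos ht0 _
  have h2 : Real.log t ≤ t - 1 := Real.log_le_sub_one_of_pos ht0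
  have h3 : Real.log t * (-β) + 1 ≤ Real.exp (Real.log t * (-β)) := Real.add_one_le_exp _
  rw [h1]
  nlinarith

lemma aux_tail_step {β : ℝ} (hβ : 0 < β) {x : ℝ} (hx : 1 ≤ x) :
    β * (x + 1) ^ (-(β + 1)) ≤ x ^ (-β) - (x + 1) ^ (-β) := by
  have hx1 : (0:ℝ) < x + 1 := by linarith
  have hx0 : (0:ℝ) < x := by linarith
  set t := x / (x + 1) with ht
  have ht0 : 0 < t := div_pos hx0 hx1
  have ht1 : t ≤ 1 := by rw [ht, div_le_one hx1]; linarith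
  have hb := aux_bern_neg hβ ht0 ht1
  have h1t : 1 - t = (x + 1)⁻¹ := by rw [ht]; field_simp; ring
  have hxt : x ^ (-β) = t ^ (-β) * (x + 1) ^ (-β) := by
    rw [← Real.mul_rpow ht0.le hx1.le]
    congr 1
    rw [ht]; field_simp
  have hpow : (x + 1) ^ (-(β + 1)) = (x + 1) ^ (-β) * (x + 1)⁻¹ := by
    rw [← Real.rpow_neg_one (x + 1), ← Real.rpow_add hx1]
    ring_nf
  have hpos : (0:ℝ) < (x + 1) ^ (-β) := Real.rpow_pos_of_pos hx1 _
  rw [hxt, hpow]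
  rw [h1t] at hb
  nlinarith [mul_le_mul_of_nonneg_right hb hpos.le]

lemma aux_tail_sum {β : ℝ} (hβ : 0 < β) {N : ℕ} (hN : 1 ≤ N) (K : ℕ) :
    ∑ k ∈ Finset.Ioc N K, (k:ℝ) ^ (-(β + 1)) ≤ (N:ℝ) ^ (-β) / β := by
  set g : ℕ → ℝ := fun j => (j:ℝ) ^ (-β) / β with hg
  have hgnn : ∀ j, 0 ≤ g j := fun j => by
    simp only [hg]; positivity
  have hstep : ∀ k ∈ Finset.Ioc N K, (k:ℝ) ^ (-(β + 1)) ≤ g (k - 1) - g k := by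
    intro k hk
    obtain ⟨hk1, hk2⟩ := Finset.mem_Ioc.mp hk
    have hx : (1:ℝ) ≤ ((k - 1 : ℕ) : ℝ) := by
      have : 1 ≤ k - 1 := by omega
      exact_mod_cast this
    have hcast : ((k - 1 : ℕ) : ℝ) + 1 = (k : ℝ) := by
      have : (k - 1) + 1 = k := by omega
      exact_mod_cast this
    have h := aux_tail_step hβ hx
    rw [hcast] at h
    simp only [hg]
    rw [div_sub_div_same, le_div_iff₀ hβ]
    linarith
  calc ∑ k ∈ Finset.Ioc N K, (k:ℝ) ^ (-(β + 1))
      ≤ ∑ k ∈ Finset.Ioc N K, (g (k - 1) - g k) := Finset.sum_le_sum hstep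
    _ ≤ g N := by
        rcases le_or_gt K N with h | h
        · rw [Finset.Ioc_eq_empty (by omega)]
          simpa using hgnn N
        · have heq : ∑ k ∈ Finset.Ioc N K, (g (k - 1) - g k)
              = ∑ i ∈ Finset.range (K - N), ((fun i => g (N + i)) i - (fun i => g (N + i)) (i + 1)) := by
            rw [← Finset.Ico_add_one_add_one_eq_Ioc, Finset.sum_Ico_eq_sum_range]
            rw [show K + 1 - (N + 1) = K - N from by omega]
            refine Finset.sum_congr rfl fun i _ => ?_
            rw [show N + 1 + i - 1 = N + i from by omega, show N + 1 + i = N + (i + 1) from by omega]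
          rw [heq, Finset.sum_range_sub']
          have h2 := hgnn (N + (K - N))
          simp only [Nat.add_zero]
          linarith
    _ = (N:ℝ) ^ (-β) / β := rfl

lemma aux_partial {a : ℝ} (ha : 0 < a) (ha1 : a ≤ 1) (N : ℕ) :
    ∑ m ∈ Finset.Icc 1 N, (m:ℝ) ^ (a - 1) ≤ (N:ℝ) ^ a / a := by
  have hstep : ∀ m ∈ Finset.Icc 1 N,
      (m:ℝ) ^ (a - 1) ≤ (m:ℝ) ^ a / a - ((m - 1 : ℕ) : ℝ) ^ a / a := by
    intro m hm
    obtain ⟨hm1, _⟩ := Finset.mem_Icc.mp hm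
    have hm0 : (0:ℝ) < (m:ℝ) := by exact_mod_cast hm1
    set t : ℝ := ((m - 1 : ℕ) : ℝ) / (m : ℝ) with htdef
    have ht0 : 0 ≤ t := by positivity
    have hgm : t ^ a * 1 ^ (1 - a) ≤ a * t + (1 - a) * 1 :=
      Real.geom_mean_le_arith_mean2_weighted ha.le (by linarith) ht0 zero_le_one (by ring)
    have hgm' : t ^ a ≤ a * t + (1 - a) := by
      rw [Real.one_rpow] at hgm; linarith
    have hmt : ((m - 1 : ℕ) : ℝ) = t * m := by
      rw [htdef]; field_simp
    have hsub : ((m - 1 : ℕ) : ℝ) ^ a = t ^ a * (m:ℝ) ^ a := by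
      rw [hmt, Real.mul_rpow ht0 hm0.le]
    have h1t : 1 - t = (m:ℝ)⁻¹ := by
      rw [htdef]
      have : ((m - 1 : ℕ) : ℝ) = (m:ℝ) - 1 := by
        have : ((m - 1) : ℕ) + 1 = m := by omega
        have := congrArg (fun x : ℕ => (x : ℝ)) this
        push_cast at this
        linarith
      rw [this]; field_simp; ring
    have hma : (m:ℝ) ^ (a - 1) = (m:ℝ) ^ a * (m:ℝ)⁻¹ := by
      rw [← Real.rpow_neg_one (m:ℝ), ← Real.rpow_add hm0]; ring_nf
    have hpa : (0:ℝ) < (m:ℝ) ^ a := Real.rpow_pos_of_pos hm0 _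
    rw [hsub, hma]
    rw [div_sub_div_same, le_div_iff₀ ha]
    have : (1 - t ^ a) ≥ a * (1 - t) := by linarith
    calc (m:ℝ) ^ a * (m:ℝ)⁻¹ * a = (m:ℝ) ^ a * (a * (1 - t)) := by rw [h1t]; ring
      _ ≤ (m:ℝ) ^ a * (1 - t ^ a) := by nlinarith
      _ = (m:ℝ) ^ a - t ^ a * (m:ℝ) ^ a := by ring
  calc ∑ m ∈ Finset.Icc 1 N, (m:ℝ) ^ (a - 1)
      ≤ ∑ m ∈ Finset.Icc 1 N, ((m:ℝ) ^ a / a - ((m - 1 : ℕ) : ℝ) ^ a / a) :=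
        Finset.sum_le_sum hstep
    _ = (N:ℝ) ^ a / a := by
        rw [← Finset.Ico_add_one_right_eq_Icc, Finset.sum_Ico_eq_sum_range]
        rw [show N + 1 - 1 = N from rfl]
        have heq : ∀ i ∈ Finset.range N,
            ((1 + i : ℕ) : ℝ) ^ a / a - (((1 + i) - 1 : ℕ) : ℝ) ^ a / a
            = (fun j : ℕ => ((j:ℕ):ℝ) ^ a / a) (i + 1) - (fun j : ℕ => ((j:ℕ):ℝ) ^ a / a) i := by
          intro i _
          rw [show (1 + i) - 1 = i from by omega, show 1 + i = i + 1 from by omega]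
        rw [Finset.sum_congr rfl heq]
        have hts := Finset.sum_range_sub (fun j : ℕ => ((j:ℕ):ℝ) ^ a / a) N
        rw [hts]
        simp [Real.zero_rpow ha.ne']

lemma aux_pointA {x : ℝ} (hx0 : 0 ≤ x) (hx1 : x ≤ 1) {l s : ℕ} (hl : 1 ≤ l) (hs : 1 ≤ s) :
    x ^ l * (1 - x) ^ s ≤ (l:ℝ) ^ l / (s:ℝ) ^ l := by
  have hs0 : (0:ℝ) < (s:ℝ) := by exact_mod_cast hs
  have hl0 : (0:ℝ) < (l:ℝ) := by exact_mod_cast hl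
  have hsx : 0 ≤ (s:ℝ) * x := by positivity
  -- (1-x)^s ≤ exp (-(s*x))
  have h1 : (1 - x) ^ s ≤ Real.exp (-((s:ℝ) * x)) := by
    have hb : 1 - x ≤ Real.exp (-x) := by
      have := Real.add_one_le_exp (-x); linarith
    calc (1 - x) ^ s ≤ (Real.exp (-x)) ^ s := pow_le_pow_left₀ (by linarith) hb s
      _ = Real.exp ((s:ℕ) * (-x)) := by rw [← Real.exp_nat_mul]
      _ = Real.exp (-((s:ℝ) * x)) := by ring_nf
  -- (s*x)^l ≤ l^l * exp (s*x)
  have h2 : ((s:ℝ) * x) ^ l ≤ (l:ℝ) ^ l * Real.exp ((s:ℝ) * x) := by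
    have hz : (s:ℝ) * x / l ≤ Real.exp ((s:ℝ) * x / l) := by
      have := Real.add_one_le_exp ((s:ℝ) * x / l); linarith
    have hp : ((s:ℝ) * x / l) ^ l ≤ (Real.exp ((s:ℝ) * x / l)) ^ l :=
      pow_le_pow_left₀ (by positivity) hz l
    rw [← Real.exp_nat_mul] at hp
    have hexp : (l:ℝ) * ((s:ℝ) * x / l) = (s:ℝ) * x := by field_simp
    rw [hexp] at hp
    have hd : ((s:ℝ) * x / l) ^ l = ((s:ℝ) * x) ^ l / (l:ℝ) ^ l := div_pow _ _ _
    rw [hd, div_le_iff₀ (by positivity)] at hp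
    calc ((s:ℝ) * x) ^ l ≤ Real.exp ((s:ℝ) * x) * (l:ℝ) ^ l := hp
      _ = (l:ℝ) ^ l * Real.exp ((s:ℝ) * x) := by ring
  -- combine
  have hx' : x ^ l = ((s:ℝ) * x) ^ l / (s:ℝ) ^ l := by
    rw [mul_pow]; field_simp
  have hnn : (0:ℝ) ≤ (1 - x) ^ s := pow_nonneg (by linarith) s
  calc x ^ l * (1 - x) ^ s
      ≤ x ^ l * Real.exp (-((s:ℝ) * x)) := by
        have : (0:ℝ) ≤ x ^ l := pow_nonneg hx0 l
        exact mul_le_mul_of_nonneg_left h1 this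
    _ = ((s:ℝ) * x) ^ l / (s:ℝ) ^ l * Real.exp (-((s:ℝ) * x)) := by rw [hx']
    _ ≤ ((l:ℝ) ^ l * Real.exp ((s:ℝ) * x)) / (s:ℝ) ^ l * Real.exp (-((s:ℝ) * x)) := by
        exact mul_le_mul_of_nonneg_right (div_le_div_of_nonneg_right h2 (by positivity))
          (Real.exp_nonneg _)
    _ = (l:ℝ) ^ l / (s:ℝ) ^ l * (Real.exp ((s:ℝ) * x) * Real.exp (-((s:ℝ) * x))) := by ring
    _ = (l:ℝ) ^ l / (s:ℝ) ^ l := by rw [← Real.exp_add]; simp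

lemma aux_harm (N : ℕ) : ∑ k ∈ Finset.Icc 1 N, (1:ℝ) / k ≤ 1 + Real.log N := by
  have h := harmonic_le_one_add_log N
  have heq : ((harmonic N : ℚ) : ℝ) = ∑ k ∈ Finset.Icc 1 N, (1:ℝ) / k := by
    rw [harmonic_eq_sum_Icc]
    push_cast
    simp [one_div]
  linarith [heq ▸ h]

lemma aux_double (n : ℕ) :
    ∑ m ∈ Finset.Icc 1 n, ∑ k ∈ Finset.Icc (n - m + 1) n, (1:ℝ) / k = n := by
  have hcomm := Finset.sum_comm' (s := Finset.Icc 1 n) (t := fun m => Finset.Icc (n - m + 1) n)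
    (t' := Finset.Icc 1 n) (s' := fun k => Finset.Icc (n - k + 1) n)
    (f := fun _ k => (1:ℝ) / k)
    (by
      intro m k
      simp only [Finset.mem_Icc]
      omega)
  rw [hcomm]
  have hinner : ∀ k ∈ Finset.Icc 1 n, ∑ _m ∈ Finset.Icc (n - k + 1) n, (1:ℝ) / k = 1 := by
    intro k hk
    obtain ⟨hk1, hk2⟩ := Finset.mem_Icc.mp hk
    rw [Finset.sum_const, Nat.card_Icc, nsmul_eq_mul]
    rw [show n + 1 - (n - k + 1) = k from by omega]
    rw [mul_one_div, div_self (Nat.cast_pos.mpr (by omega : 0 < k) |>.ne' : (k:ℝ) ≠ 0)]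
  rw [Finset.sum_congr rfl hinner]
  simp [Nat.card_Icc]

lemma aux_inner (n m : ℕ) (h1 : 1 ≤ m) (h2 : m ≤ n) :
    ∑ k ∈ Finset.Icc (n - m + 1) n, (1:ℝ) / k ≤ (m:ℝ) * (1 / ((n - m + 1 : ℕ) : ℝ)) := by
  have hcard : (Finset.Icc (n - m + 1) n).card = m := by
    rw [Nat.card_Icc]; omega
  have hb : ∀ k ∈ Finset.Icc (n - m + 1) n, (1:ℝ) / k ≤ 1 / ((n - m + 1 : ℕ) : ℝ) := by
    intro k hk
    obtain ⟨hk1, _⟩ := Finset.mem_Icc.mp hk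
    apply one_div_le_one_div_of_le
    · exact Nat.cast_pos.mpr (by omega)
    · exact_mod_cast hk1
  calc ∑ k ∈ Finset.Icc (n - m + 1) n, (1:ℝ) / k
      ≤ ∑ _k ∈ Finset.Icc (n - m + 1) n, (1 / ((n - m + 1 : ℕ) : ℝ)) := Finset.sum_le_sum hb
    _ = (m:ℝ) * (1 / ((n - m + 1 : ℕ) : ℝ)) := by
        rw [Finset.sum_const, hcard, nsmul_eq_mul]

lemma aux_key (p : ℕ+ → ℝ) (hp0 : ∀ j, 0 ≤ p j) (hsum : ∑' j, p j = 1)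
    (M α : ℝ) (hM : 0 < M) (hα0 : 0 < α) (hα1 : α < 1)
    (hbound : ∀ j : ℕ+, p j ≤ M * (j : ℝ) ^ (-(1 / α)))
    (l : ℕ) (hl : 1 ≤ l) :
    ∃ C > 0, ∀ s : ℕ, 1 ≤ s →
      (∑' i : ℕ+, p i ^ l * (1 - p i) ^ s) ≤ C * (s:ℝ) ^ (α - l) := by
  have hps : Summable p := by
    by_contra h
    rw [tsum_eq_zero_of_not_summable h] at hsum
    norm_num at hsum
  have hp1 : ∀ i, p i ≤ 1 := by
    intro i
    rw [← hsum]
    exact Summable.le_tsum hps i fun j _ => hp0 j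
  set q : ℝ := (l:ℝ) / α with hqdef
  have hq1 : 1 < q := by
    rw [hqdef, lt_div_iff₀ hα0]
    have : (1:ℝ) ≤ (l:ℝ) := by exact_mod_cast hl
    linarith
  set β : ℝ := q - 1 with hβdef
  have hβ : 0 < β := by rw [hβdef]; linarith
  refine ⟨2 * (l:ℝ) ^ l + M ^ l / β, by positivity, ?_⟩
  intro s hs
  have hs0 : (0:ℝ) < (s:ℝ) := by exact_mod_cast hs
  have hsa0 : (0:ℝ) < (s:ℝ) ^ α := Real.rpow_pos_of_pos hs0 _
  set N : ℕ := ⌈(s:ℝ) ^ α⌉₊ with hNdef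
  have hN1 : 1 ≤ N := Nat.one_le_ceil_iff.mpr hsa0
  have hNge : (s:ℝ) ^ α ≤ (N:ℝ) := Nat.le_ceil _
  have hsa1 : (1:ℝ) ≤ (s:ℝ) ^ α :=
    Real.one_le_rpow (by exact_mod_cast hs) hα0.le
  have hNle : (N:ℝ) ≤ 2 * (s:ℝ) ^ α := by
    have := Nat.ceil_lt_add_one (le_of_lt hsa0)
    rw [← hNdef] at this
    linarith
  have hspow : (s:ℝ) ^ (α - (l:ℝ)) = (s:ℝ) ^ α / (s:ℝ) ^ l := by
    rw [Real.rpow_sub hs0, Real.rpow_natCast]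
  have hterm_small : ∀ i : ℕ+, p i ^ l * (1 - p i) ^ s ≤ (l:ℝ) ^ l / (s:ℝ) ^ l :=
    fun i => aux_pointA (hp0 i) (hp1 i) hl hs
  have hterm_tail : ∀ i : ℕ+, p i ^ l * (1 - p i) ^ s ≤ M ^ l * ((i:ℕ):ℝ) ^ (-(β + 1)) := by
    intro i
    have hi0 : (0:ℝ) < ((i:ℕ):ℝ) := by exact_mod_cast i.pos
    have h3 : (((i:ℕ):ℝ) ^ (-(1/α))) ^ l = ((i:ℕ):ℝ) ^ (-(β + 1)) := by
      rw [← Real.rpow_natCast (((i:ℕ):ℝ) ^ (-(1/α))) l, ← Real.rpow_mul hi0.le]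
      congr 1
      rw [hβdef, hqdef]
      field_simp
      ring
    have h1 : p i ^ l ≤ (M * ((i:ℕ):ℝ) ^ (-(1/α))) ^ l := by
      apply pow_le_pow_left₀ (hp0 i)
      exact_mod_cast hbound i
    have h2 : (1 - p i) ^ s ≤ 1 := by
      apply pow_le_one₀
      · linarith [hp1 i]
      · linarith [hp0 i]
    calc p i ^ l * (1 - p i) ^ s ≤ p i ^ l * 1 := by
          apply mul_le_mul_of_nonneg_left h2 (pow_nonneg (hp0 i) l)
      _ = p i ^ l := mul_one _
      _ ≤ (M * ((i:ℕ):ℝ) ^ (-(1/α))) ^ l := h1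
      _ = M ^ l * ((i:ℕ):ℝ) ^ (-(β + 1)) := by rw [mul_pow, h3]
  apply tsum_le_of_sum_le'
  · positivity
  intro u
  rw [← Finset.sum_filter_add_sum_filter_not u (fun i : ℕ+ => (i:ℕ) ≤ N)]
  have hpart1 : ∑ i ∈ u.filter (fun i : ℕ+ => (i:ℕ) ≤ N), p i ^ l * (1 - p i) ^ s
      ≤ (N:ℝ) * ((l:ℝ) ^ l / (s:ℝ) ^ l) := by
    calc ∑ i ∈ u.filter (fun i : ℕ+ => (i:ℕ) ≤ N), p i ^ l * (1 - p i) ^ s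
        ≤ ∑ _i ∈ u.filter (fun i : ℕ+ => (i:ℕ) ≤ N), (l:ℝ) ^ l / (s:ℝ) ^ l :=
          Finset.sum_le_sum fun i _ => hterm_small i
      _ = ((u.filter (fun i : ℕ+ => (i:ℕ) ≤ N)).card : ℝ) * ((l:ℝ) ^ l / (s:ℝ) ^ l) := by
          rw [Finset.sum_const, nsmul_eq_mul]
      _ ≤ (N:ℝ) * ((l:ℝ) ^ l / (s:ℝ) ^ l) := by
          apply mul_le_mul_of_nonneg_right _ (by positivity)
          have hcard : (u.filter (fun i : ℕ+ => (i:ℕ) ≤ N)).card ≤ N := by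
            have hinj : ∀ a ∈ u.filter (fun i : ℕ+ => (i:ℕ) ≤ N), ∀ b ∈ u.filter (fun i : ℕ+ => (i:ℕ) ≤ N),
                (a:ℕ) = (b:ℕ) → a = b := fun a _ b _ h => PNat.coe_injective h
            have hmaps : ∀ a ∈ u.filter (fun i : ℕ+ => (i:ℕ) ≤ N), (a:ℕ) ∈ Finset.Icc 1 N := by
              intro a ha
              rw [Finset.mem_filter] at ha
              rw [Finset.mem_Icc]
              exact ⟨a.one_le, ha.2⟩
            have := Finset.card_le_card_of_injOn (fun i : ℕ+ => (i:ℕ)) hmaps hinj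
            simpa [Nat.card_Icc] using this
          exact_mod_cast hcard
  have hpart2 : ∑ i ∈ u.filter (fun i : ℕ+ => ¬((i:ℕ) ≤ N)), p i ^ l * (1 - p i) ^ s
      ≤ M ^ l * ((N:ℝ) ^ (-β) / β) := by
    set F2 := u.filter (fun i : ℕ+ => ¬((i:ℕ) ≤ N)) with hF2
    set v := F2.image (fun i : ℕ+ => (i:ℕ)) with hv
    set K : ℕ := v.sup id with hK
    calc ∑ i ∈ F2, p i ^ l * (1 - p i) ^ s
        ≤ ∑ i ∈ F2, M ^ l * ((i:ℕ):ℝ) ^ (-(β + 1)) := Finset.sum_le_sum fun i _ => hterm_tail i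
      _ = M ^ l * ∑ i ∈ F2, ((i:ℕ):ℝ) ^ (-(β + 1)) := by rw [Finset.mul_sum]
      _ ≤ M ^ l * ((N:ℝ) ^ (-β) / β) := by
          apply mul_le_mul_of_nonneg_left _ (by positivity)
          have himg : ∑ i ∈ F2, ((i:ℕ):ℝ) ^ (-(β + 1)) = ∑ k ∈ v, (k:ℝ) ^ (-(β + 1)) := by
            rw [hv, Finset.sum_image (fun a _ b _ h => PNat.coe_injective h)]
          rw [himg]
          have hsub : v ⊆ Finset.Ioc N K := by
            intro k hk
            rw [Finset.mem_Ioc]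
            constructor
            · rw [hv, Finset.mem_image] at hk
              obtain ⟨i, hi, rfl⟩ := hk
              rw [hF2, Finset.mem_filter] at hi
              omega
            · exact Finset.le_sup (f := id) hk
          calc ∑ k ∈ v, (k:ℝ) ^ (-(β + 1))
              ≤ ∑ k ∈ Finset.Ioc N K, (k:ℝ) ^ (-(β + 1)) :=
                Finset.sum_le_sum_of_subset_of_nonneg hsub (fun k _ _ => by positivity)
            _ ≤ (N:ℝ) ^ (-β) / β := aux_tail_sum hβ hN1 K
  have hNβ : (N:ℝ) ^ (-β) ≤ (s:ℝ) ^ (α - (l:ℝ)) := by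
    have h1 : (N:ℝ) ^ (-β) ≤ ((s:ℝ) ^ α) ^ (-β) :=
      Real.rpow_le_rpow_of_nonpos hsa0 hNge (by linarith)
    have h2 : ((s:ℝ) ^ α) ^ (-β) = (s:ℝ) ^ (α - (l:ℝ)) := by
      rw [← Real.rpow_mul hs0.le]
      congr 1
      rw [hβdef, hqdef]
      field_simp
      ring
    linarith [h2 ▸ h1]
  have hterm1 : (N:ℝ) * ((l:ℝ) ^ l / (s:ℝ) ^ l) ≤ 2 * (l:ℝ) ^ l * (s:ℝ) ^ (α - (l:ℝ)) := by
    rw [hspow]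
    have hll : (0:ℝ) ≤ (l:ℝ) ^ l / (s:ℝ) ^ l := by positivity
    calc (N:ℝ) * ((l:ℝ) ^ l / (s:ℝ) ^ l) ≤ (2 * (s:ℝ) ^ α) * ((l:ℝ) ^ l / (s:ℝ) ^ l) :=
          mul_le_mul_of_nonneg_right hNle hll
      _ = 2 * (l:ℝ) ^ l * ((s:ℝ) ^ α / (s:ℝ) ^ l) := by ring
  have hterm2 : M ^ l * ((N:ℝ) ^ (-β) / β) ≤ M ^ l / β * (s:ℝ) ^ (α - (l:ℝ)) := by
    calc M ^ l * ((N:ℝ) ^ (-β) / β) = M ^ l / β * (N:ℝ) ^ (-β) := by ring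
      _ ≤ M ^ l / β * (s:ℝ) ^ (α - (l:ℝ)) :=
          mul_le_mul_of_nonneg_left hNβ (by positivity)
  calc ∑ i ∈ u.filter (fun i : ℕ+ => (i:ℕ) ≤ N), p i ^ l * (1 - p i) ^ s
        + ∑ i ∈ u.filter (fun i : ℕ+ => ¬((i:ℕ) ≤ N)), p i ^ l * (1 - p i) ^ s
      ≤ (N:ℝ) * ((l:ℝ) ^ l / (s:ℝ) ^ l) + M ^ l * ((N:ℝ) ^ (-β) / β) := add_le_add hpart1 hpart2
    _ ≤ 2 * (l:ℝ) ^ l * (s:ℝ) ^ (α - (l:ℝ)) + M ^ l / β * (s:ℝ) ^ (α - (l:ℝ)) :=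
        add_le_add hterm1 hterm2
    _ = (2 * (l:ℝ) ^ l + M ^ l / β) * (s:ℝ) ^ (α - (l:ℝ)) := by ring

lemma part_i (p : ℕ+ → ℝ) (hp0 : ∀ j, 0 ≤ p j)
    (α : ℝ) (hα0 : 0 < α) (hα1 : α < 1)
    (C : ℝ) (hC : 0 < C)
    (hF : ∀ s : ℕ, 1 ≤ s → (∑' i : ℕ+, p i * (1 - p i) ^ s) ≤ C * (s:ℝ) ^ (α - 1))
    (hFnn : ∀ s : ℕ, 0 ≤ ∑' i : ℕ+, p i * (1 - p i) ^ s) :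
    ∃ C₁ > 0, ∀ n : ℕ, 2 ≤ n →
      ∑ m ∈ Finset.Icc 1 n, ∑ k ∈ Finset.Icc (n - m + 1) n,
          (∑' i : ℕ+, p i * (1 - p i) ^ m) / (m * k)
        ≤ C₁ * ((n : ℝ) ^ (-(1 - α)) + Real.log n / n) := by
  set F : ℕ → ℝ := fun s => ∑' i : ℕ+, p i * (1 - p i) ^ s with hFdef
  refine ⟨2 * C / α + 4 * C, by positivity, ?_⟩
  intro n hn
  have hn0 : (0:ℝ) < (n:ℝ) := by exact_mod_cast Nat.lt_of_lt_of_le Nat.zero_lt_two hn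
  set h : ℕ := n / 2 with hh
  have hhn : h ≤ n := Nat.div_le_self n 2
  have hsplit : Finset.Icc 1 n = Finset.Ioc 0 n := by
    rw [show (1:ℕ) = 0 + 1 from rfl, Finset.Icc_add_one_left_eq_Ioc]
  rw [hsplit, ← Finset.sum_Ioc_consecutive _ (Nat.zero_le h) hhn]
  -- Part A
  have hA : ∑ m ∈ Finset.Ioc 0 h, ∑ k ∈ Finset.Icc (n - m + 1) n, F m / (m * k)
      ≤ 2 * C / α * (n:ℝ) ^ (α - 1) := by
    have hTm : ∀ m ∈ Finset.Ioc 0 h,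
        ∑ k ∈ Finset.Icc (n - m + 1) n, F m / (m * k) ≤ 2 * C / (n:ℝ) * (m:ℝ) ^ (α - 1) := by
      intro m hm
      obtain ⟨hm0, hmh⟩ := Finset.mem_Ioc.mp hm
      have hm1 : 1 ≤ m := hm0
      have hmn : m ≤ n := hmh.trans hhn
      have hmr : (0:ℝ) < (m:ℝ) := by exact_mod_cast hm0
      have hxpos : (0:ℝ) < ((n - m + 1 : ℕ) : ℝ) := by exact_mod_cast Nat.succ_le_succ (Nat.zero_le _)
      have hre : ∀ k ∈ Finset.Icc (n - m + 1) n, F m / (m * k) = (F m / m) * ((1:ℝ) / k) := by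
        intro k _; ring
      rw [Finset.sum_congr rfl hre, ← Finset.mul_sum]
      have hFd : 0 ≤ F m / (m:ℝ) := div_nonneg (hFnn m) hmr.le
      have hstep1 : F m / (m:ℝ) * (∑ k ∈ Finset.Icc (n - m + 1) n, (1:ℝ) / k)
          ≤ F m / (m:ℝ) * ((m:ℝ) * (1 / ((n - m + 1 : ℕ) : ℝ))) :=
        mul_le_mul_of_nonneg_left (aux_inner n m hm1 hmn) hFd
      have heq1 : F m / (m:ℝ) * ((m:ℝ) * (1 / ((n - m + 1 : ℕ) : ℝ)))
          = F m * (1 / ((n - m + 1 : ℕ) : ℝ)) := by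
        field_simp
      have hhalf : (n:ℝ) ≤ 2 * ((n - m + 1 : ℕ) : ℝ) := by
        have : n ≤ 2 * (n - m + 1) := by omega
        exact_mod_cast this
      have h1r : (1:ℝ) / ((n - m + 1 : ℕ) : ℝ) ≤ 2 / (n:ℝ) := by
        rw [div_le_div_iff₀ hxpos hn0]
        linarith
      have hstep2 : F m * (1 / ((n - m + 1 : ℕ) : ℝ)) ≤ (C * (m:ℝ) ^ (α - 1)) * (2 / (n:ℝ)) :=
        mul_le_mul (hF m hm1) h1r (by positivity) (by positivity)
      calc F m / (m:ℝ) * (∑ k ∈ Finset.Icc (n - m + 1) n, (1:ℝ) / k)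
          ≤ F m * (1 / ((n - m + 1 : ℕ) : ℝ)) := by rw [← heq1]; exact hstep1
        _ ≤ (C * (m:ℝ) ^ (α - 1)) * (2 / (n:ℝ)) := hstep2
        _ = 2 * C / (n:ℝ) * (m:ℝ) ^ (α - 1) := by ring
    calc ∑ m ∈ Finset.Ioc 0 h, ∑ k ∈ Finset.Icc (n - m + 1) n, F m / (m * k)
        ≤ ∑ m ∈ Finset.Ioc 0 h, 2 * C / (n:ℝ) * (m:ℝ) ^ (α - 1) := Finset.sum_le_sum hTm
      _ = 2 * C / (n:ℝ) * ∑ m ∈ Finset.Icc 1 h, (m:ℝ) ^ (α - 1) := by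
          rw [show Finset.Icc 1 h = Finset.Ioc 0 h from by
            rw [show (1:ℕ) = 0 + 1 from rfl, Finset.Icc_add_one_left_eq_Ioc], ← Finset.mul_sum]
      _ ≤ 2 * C / (n:ℝ) * ((h:ℝ) ^ α / α) := by
          apply mul_le_mul_of_nonneg_left (aux_partial hα0 hα1.le h) (by positivity)
      _ ≤ 2 * C / (n:ℝ) * ((n:ℝ) ^ α / α) := by
          have hha : (h:ℝ) ^ α ≤ (n:ℝ) ^ α :=
            Real.rpow_le_rpow (Nat.cast_nonneg h) (by exact_mod_cast hhn) hα0.le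
          exact mul_le_mul_of_nonneg_left (div_le_div_of_nonneg_right hha hα0.le) (by positivity)
      _ = 2 * C / α * (n:ℝ) ^ (α - 1) := by
          rw [Real.rpow_sub hn0, Real.rpow_one]
          ring
  -- Part B
  have hSnn : ∀ m : ℕ, 0 ≤ ∑ k ∈ Finset.Icc (n - m + 1) n, (1:ℝ) / k := by
    intro m
    apply Finset.sum_nonneg
    intro k _
    positivity
  have hB : ∑ m ∈ Finset.Ioc h n, ∑ k ∈ Finset.Icc (n - m + 1) n, F m / (m * k)
      ≤ 4 * C * (n:ℝ) ^ (α - 1) := by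
    have hnna : (0:ℝ) ≤ 4 * C * (n:ℝ) ^ (α - 1) / (n:ℝ) := by positivity
    have hTm : ∀ m ∈ Finset.Ioc h n,
        ∑ k ∈ Finset.Icc (n - m + 1) n, F m / (m * k)
          ≤ 4 * C * (n:ℝ) ^ (α - 1) / (n:ℝ) * ∑ k ∈ Finset.Icc (n - m + 1) n, (1:ℝ) / k := by
      intro m hm
      obtain ⟨hmh, hmn⟩ := Finset.mem_Ioc.mp hm
      have hm1 : 1 ≤ m := by omega
      have hmr : (0:ℝ) < (m:ℝ) := by exact_mod_cast hm1
      have hm2 : (n:ℝ) ≤ 2 * (m:ℝ) := by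
        have : n ≤ 2 * m := by omega
        exact_mod_cast this
      have hFm : F m ≤ 2 * C * (n:ℝ) ^ (α - 1) := by
        have h2 : (m:ℝ) ^ (α - 1) ≤ ((n:ℝ) / 2) ^ (α - 1) :=
          Real.rpow_le_rpow_of_nonpos (by positivity) (by linarith) (by linarith)
        have h3 : ((n:ℝ) / 2) ^ (α - 1) = (n:ℝ) ^ (α - 1) / (2:ℝ) ^ (α - 1) :=
          Real.div_rpow hn0.le (by norm_num : (0:ℝ) ≤ 2) (α - 1)
        have h4 : (1:ℝ) / 2 ≤ (2:ℝ) ^ (α - 1) := by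
          have h5 : (2:ℝ) ^ (-1:ℝ) ≤ (2:ℝ) ^ (α - 1) :=
            Real.rpow_le_rpow_of_exponent_le one_le_two (by linarith)
          rw [Real.rpow_neg_one] at h5
          norm_num at h5
          linarith
        have h6 : (n:ℝ) ^ (α - 1) / (2:ℝ) ^ (α - 1) ≤ (n:ℝ) ^ (α - 1) / (1 / 2) :=
          div_le_div_of_nonneg_left (by positivity) (by norm_num) h4
        calc F m ≤ C * (m:ℝ) ^ (α - 1) := hF m hm1
          _ ≤ C * (2 * (n:ℝ) ^ (α - 1)) := by
              apply mul_le_mul_of_nonneg_left _ hC.le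
              calc (m:ℝ) ^ (α - 1) ≤ ((n:ℝ) / 2) ^ (α - 1) := h2
                _ = (n:ℝ) ^ (α - 1) / (2:ℝ) ^ (α - 1) := h3
                _ ≤ (n:ℝ) ^ (α - 1) / (1 / 2) := h6
                _ = 2 * (n:ℝ) ^ (α - 1) := by ring
          _ = 2 * C * (n:ℝ) ^ (α - 1) := by ring
      have h1m : (1:ℝ) / (m:ℝ) ≤ 2 / (n:ℝ) := by
        rw [div_le_div_iff₀ hmr hn0]
        linarith
      have hterm : ∀ k ∈ Finset.Icc (n - m + 1) n,
          F m / (m * k) ≤ 4 * C * (n:ℝ) ^ (α - 1) / (n:ℝ) * ((1:ℝ) / k) := by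
        intro k hk
        obtain ⟨hk1, _⟩ := Finset.mem_Icc.mp hk
        have hk0 : (0:ℝ) ≤ (1:ℝ) / (k:ℝ) := by positivity
        have hmul : F m * ((1:ℝ) / m) ≤ (2 * C * (n:ℝ) ^ (α - 1)) * (2 / (n:ℝ)) :=
          mul_le_mul hFm h1m (by positivity) (by positivity)
        calc F m / (m * k) = F m * ((1:ℝ) / m) * ((1:ℝ) / k) := by ring
          _ ≤ (2 * C * (n:ℝ) ^ (α - 1)) * (2 / (n:ℝ)) * ((1:ℝ) / k) :=
              mul_le_mul_of_nonneg_right hmul hk0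
          _ = 4 * C * (n:ℝ) ^ (α - 1) / (n:ℝ) * ((1:ℝ) / k) := by ring
      calc ∑ k ∈ Finset.Icc (n - m + 1) n, F m / (m * k)
          ≤ ∑ k ∈ Finset.Icc (n - m + 1) n, 4 * C * (n:ℝ) ^ (α - 1) / (n:ℝ) * ((1:ℝ) / k) :=
            Finset.sum_le_sum hterm
        _ = 4 * C * (n:ℝ) ^ (α - 1) / (n:ℝ) * ∑ k ∈ Finset.Icc (n - m + 1) n, (1:ℝ) / k := by
            rw [← Finset.mul_sum]
    calc ∑ m ∈ Finset.Ioc h n, ∑ k ∈ Finset.Icc (n - m + 1) n, F m / (m * k)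
        ≤ ∑ m ∈ Finset.Ioc h n,
            4 * C * (n:ℝ) ^ (α - 1) / (n:ℝ) * ∑ k ∈ Finset.Icc (n - m + 1) n, (1:ℝ) / k :=
          Finset.sum_le_sum hTm
      _ = 4 * C * (n:ℝ) ^ (α - 1) / (n:ℝ)
            * ∑ m ∈ Finset.Ioc h n, ∑ k ∈ Finset.Icc (n - m + 1) n, (1:ℝ) / k := by
          rw [← Finset.mul_sum]
      _ ≤ 4 * C * (n:ℝ) ^ (α - 1) / (n:ℝ) * (n:ℝ) := by
          apply mul_le_mul_of_nonneg_left _ hnna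
          calc ∑ m ∈ Finset.Ioc h n, ∑ k ∈ Finset.Icc (n - m + 1) n, (1:ℝ) / k
              ≤ ∑ m ∈ Finset.Icc 1 n, ∑ k ∈ Finset.Icc (n - m + 1) n, (1:ℝ) / k := by
                apply Finset.sum_le_sum_of_subset_of_nonneg
                · intro m hm
                  rw [Finset.mem_Ioc] at hm
                  rw [Finset.mem_Icc]
                  omega
                · intro m _ _
                  exact hSnn m
            _ = (n:ℝ) := aux_double n
      _ = 4 * C * (n:ℝ) ^ (α - 1) := by
          rw [div_mul_cancel₀ _ hn0.ne']
  have hexp : (n:ℝ) ^ (-(1 - α)) = (n:ℝ) ^ (α - 1) := by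
    rw [show -(1 - α) = α - 1 from by ring]
  have hlog : 0 ≤ Real.log n / n := by
    apply div_nonneg _ hn0.le
    apply Real.log_nonneg
    exact_mod_cast Nat.one_le_of_lt hn
  have hcoef : (0:ℝ) ≤ 2 * C / α + 4 * C := by positivity
  have hrnn : (0:ℝ) ≤ (n:ℝ) ^ (α - 1) := by positivity
  rw [hexp]
  nlinarith [hA, hB]

lemma aux_Dbound (n : ℕ) (hn : 1 ≤ n) :
    ∑ m ∈ Finset.Icc 1 n, ∑ k ∈ Finset.Icc (n - m + 1) n, (1:ℝ) / (m * k) ≤ 3 := by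
  have hn0 : (0:ℝ) < (n:ℝ) := by exact_mod_cast hn
  set h : ℕ := n / 2 with hh
  have hhn : h ≤ n := Nat.div_le_self n 2
  have hsplit : Finset.Icc 1 n = Finset.Ioc 0 n := by
    rw [show (1:ℕ) = 0 + 1 from rfl, Finset.Icc_add_one_left_eq_Ioc]
  rw [hsplit, ← Finset.sum_Ioc_consecutive _ (Nat.zero_le h) hhn]
  have hA : ∑ m ∈ Finset.Ioc 0 h, ∑ k ∈ Finset.Icc (n - m + 1) n, (1:ℝ) / (m * k) ≤ 1 := by
    have hTm : ∀ m ∈ Finset.Ioc 0 h,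
        ∑ k ∈ Finset.Icc (n - m + 1) n, (1:ℝ) / (m * k) ≤ 2 / (n:ℝ) := by
      intro m hm
      obtain ⟨hm0, hmh⟩ := Finset.mem_Ioc.mp hm
      have hm1 : 1 ≤ m := hm0
      have hmn : m ≤ n := hmh.trans hhn
      have hmr : (0:ℝ) < (m:ℝ) := by exact_mod_cast hm0
      have hxpos : (0:ℝ) < ((n - m + 1 : ℕ) : ℝ) := by
        exact_mod_cast Nat.succ_le_succ (Nat.zero_le _)
      have hre : ∀ k ∈ Finset.Icc (n - m + 1) n, (1:ℝ) / (m * k) = (1 / (m:ℝ)) * ((1:ℝ) / k) := by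
        intro k _; ring
      rw [Finset.sum_congr rfl hre, ← Finset.mul_sum]
      have hstep1 : (1 / (m:ℝ)) * (∑ k ∈ Finset.Icc (n - m + 1) n, (1:ℝ) / k)
          ≤ (1 / (m:ℝ)) * ((m:ℝ) * (1 / ((n - m + 1 : ℕ) : ℝ))) :=
        mul_le_mul_of_nonneg_left (aux_inner n m hm1 hmn) (by positivity)
      have heq1 : (1 / (m:ℝ)) * ((m:ℝ) * (1 / ((n - m + 1 : ℕ) : ℝ)))
          = 1 / ((n - m + 1 : ℕ) : ℝ) := by field_simp
      have hhalf : (n:ℝ) ≤ 2 * ((n - m + 1 : ℕ) : ℝ) := by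
        have : n ≤ 2 * (n - m + 1) := by omega
        exact_mod_cast this
      have h1r : (1:ℝ) / ((n - m + 1 : ℕ) : ℝ) ≤ 2 / (n:ℝ) := by
        rw [div_le_div_iff₀ hxpos hn0]
        linarith
      calc (1 / (m:ℝ)) * (∑ k ∈ Finset.Icc (n - m + 1) n, (1:ℝ) / k)
          ≤ 1 / ((n - m + 1 : ℕ) : ℝ) := by rw [← heq1]; exact hstep1
        _ ≤ 2 / (n:ℝ) := h1r
    calc ∑ m ∈ Finset.Ioc 0 h, ∑ k ∈ Finset.Icc (n - m + 1) n, (1:ℝ) / (m * k)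
        ≤ ∑ _m ∈ Finset.Ioc 0 h, 2 / (n:ℝ) := Finset.sum_le_sum hTm
      _ = (h:ℝ) * (2 / (n:ℝ)) := by
          rw [Finset.sum_const, nsmul_eq_mul, Nat.card_Ioc, Nat.sub_zero]
      _ ≤ 1 := by
          have h2h : 2 * (h:ℝ) ≤ (n:ℝ) := by
            have : 2 * h ≤ n := by omega
            exact_mod_cast this
          rw [← mul_div_assoc, div_le_one hn0]
          linarith
  have hB : ∑ m ∈ Finset.Ioc h n, ∑ k ∈ Finset.Icc (n - m + 1) n, (1:ℝ) / (m * k) ≤ 2 := by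
    have hTm : ∀ m ∈ Finset.Ioc h n,
        ∑ k ∈ Finset.Icc (n - m + 1) n, (1:ℝ) / (m * k)
          ≤ 2 / (n:ℝ) * ∑ k ∈ Finset.Icc (n - m + 1) n, (1:ℝ) / k := by
      intro m hm
      obtain ⟨hmh, hmn⟩ := Finset.mem_Ioc.mp hm
      have hm1 : 1 ≤ m := by omega
      have hmr : (0:ℝ) < (m:ℝ) := by exact_mod_cast hm1
      have hm2 : (n:ℝ) ≤ 2 * (m:ℝ) := by
        have : n ≤ 2 * m := by omega
        exact_mod_cast this
      have h1m : (1:ℝ) / (m:ℝ) ≤ 2 / (n:ℝ) := by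
        rw [div_le_div_iff₀ hmr hn0]
        linarith
      have hterm : ∀ k ∈ Finset.Icc (n - m + 1) n,
          (1:ℝ) / (m * k) ≤ 2 / (n:ℝ) * ((1:ℝ) / k) := by
        intro k _
        have hre : (1:ℝ) / (m * k) = (1 / (m:ℝ)) * ((1:ℝ) / k) := by ring
        rw [hre]
        exact mul_le_mul_of_nonneg_right h1m (by positivity)
      calc ∑ k ∈ Finset.Icc (n - m + 1) n, (1:ℝ) / (m * k)
          ≤ ∑ k ∈ Finset.Icc (n - m + 1) n, 2 / (n:ℝ) * ((1:ℝ) / k) :=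
            Finset.sum_le_sum hterm
        _ = 2 / (n:ℝ) * ∑ k ∈ Finset.Icc (n - m + 1) n, (1:ℝ) / k := by
            rw [← Finset.mul_sum]
    calc ∑ m ∈ Finset.Ioc h n, ∑ k ∈ Finset.Icc (n - m + 1) n, (1:ℝ) / (m * k)
        ≤ ∑ m ∈ Finset.Ioc h n, 2 / (n:ℝ) * ∑ k ∈ Finset.Icc (n - m + 1) n, (1:ℝ) / k :=
          Finset.sum_le_sum hTm
      _ = 2 / (n:ℝ) * ∑ m ∈ Finset.Ioc h n, ∑ k ∈ Finset.Icc (n - m + 1) n, (1:ℝ) / k := by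
          rw [← Finset.mul_sum]
      _ ≤ 2 / (n:ℝ) * (n:ℝ) := by
          apply mul_le_mul_of_nonneg_left _ (by positivity)
          calc ∑ m ∈ Finset.Ioc h n, ∑ k ∈ Finset.Icc (n - m + 1) n, (1:ℝ) / k
              ≤ ∑ m ∈ Finset.Icc 1 n, ∑ k ∈ Finset.Icc (n - m + 1) n, (1:ℝ) / k := by
                apply Finset.sum_le_sum_of_subset_of_nonneg
                · intro m hm
                  rw [Finset.mem_Ioc] at hm
                  rw [Finset.mem_Icc]
                  omega
                · intro m _ _
                  exact Finset.sum_nonneg fun k _ => by positivity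
            _ = (n:ℝ) := aux_double n
      _ = 2 := by field_simp
  linarith

lemma part_ii (p : ℕ+ → ℝ)
    (α : ℝ) (hα0 : 0 < α) (hα1 : α < 1)
    (l : ℕ) (hl : 1 ≤ l)
    (C : ℝ) (hC : 0 < C)
    (hF : ∀ s : ℕ, 1 ≤ s → (∑' i : ℕ+, p i ^ l * (1 - p i) ^ s) ≤ C * (s:ℝ) ^ (α - (l:ℝ)))
    (hFnn : ∀ s : ℕ, 0 ≤ ∑' i : ℕ+, p i ^ l * (1 - p i) ^ s) :
    ∃ C₂ > 0, ∀ n : ℕ, 1 ≤ n →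
      ∑ m ∈ Finset.Icc 1 n, ∑ k ∈ Finset.Icc (n - m + 1) n,
          (∑' i : ℕ+, p i ^ l * (1 - p i) ^ (m + k)) / (m * k)
        ≤ C₂ / (n : ℝ) ^ ((l : ℝ) - α) := by
  refine ⟨3 * C, by positivity, ?_⟩
  intro n hn
  have hn0 : (0:ℝ) < (n:ℝ) := by exact_mod_cast hn
  have hl1 : (1:ℝ) ≤ (l:ℝ) := by exact_mod_cast hl
  have hstep : ∀ m ∈ Finset.Icc 1 n, ∀ k ∈ Finset.Icc (n - m + 1) n,
      (∑' i : ℕ+, p i ^ l * (1 - p i) ^ (m + k)) / ((m:ℝ) * k)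
        ≤ C * (n:ℝ) ^ (α - (l:ℝ)) * ((1:ℝ) / (m * k)) := by
    intro m hm k hk
    obtain ⟨hm1, hmn⟩ := Finset.mem_Icc.mp hm
    obtain ⟨hk1, hkn⟩ := Finset.mem_Icc.mp hk
    have hmk1 : 1 ≤ m + k := by omega
    have hmkn : (n:ℝ) ≤ ((m + k : ℕ) : ℝ) := by
      have : n ≤ m + k := by omega
      exact_mod_cast this
    have hG : (∑' i : ℕ+, p i ^ l * (1 - p i) ^ (m + k)) ≤ C * (n:ℝ) ^ (α - (l:ℝ)) := by
      calc (∑' i : ℕ+, p i ^ l * (1 - p i) ^ (m + k))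
          ≤ C * ((m + k : ℕ) : ℝ) ^ (α - (l:ℝ)) := hF (m + k) hmk1
        _ ≤ C * (n:ℝ) ^ (α - (l:ℝ)) := by
            apply mul_le_mul_of_nonneg_left _ hC.le
            exact Real.rpow_le_rpow_of_nonpos hn0 hmkn (by linarith)
    have hre : (∑' i : ℕ+, p i ^ l * (1 - p i) ^ (m + k)) / ((m:ℝ) * k)
        = (∑' i : ℕ+, p i ^ l * (1 - p i) ^ (m + k)) * ((1:ℝ) / (m * k)) := by ring
    rw [hre]
    exact mul_le_mul_of_nonneg_right hG (by positivity)
  calc ∑ m ∈ Finset.Icc 1 n, ∑ k ∈ Finset.Icc (n - m + 1) n,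
        (∑' i : ℕ+, p i ^ l * (1 - p i) ^ (m + k)) / ((m:ℝ) * k)
      ≤ ∑ m ∈ Finset.Icc 1 n, ∑ k ∈ Finset.Icc (n - m + 1) n,
          C * (n:ℝ) ^ (α - (l:ℝ)) * ((1:ℝ) / (m * k)) :=
        Finset.sum_le_sum fun m hm => Finset.sum_le_sum (hstep m hm)
    _ = C * (n:ℝ) ^ (α - (l:ℝ))
          * ∑ m ∈ Finset.Icc 1 n, ∑ k ∈ Finset.Icc (n - m + 1) n, (1:ℝ) / (m * k) := by
        rw [Finset.mul_sum]
        refine Finset.sum_congr rfl fun m _ => ?_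
        rw [Finset.mul_sum]
    _ ≤ C * (n:ℝ) ^ (α - (l:ℝ)) * 3 := by
        apply mul_le_mul_of_nonneg_left (aux_Dbound n hn) (by positivity)
    _ = 3 * C / (n:ℝ) ^ ((l:ℝ) - α) := by
        rw [show α - (l:ℝ) = -((l:ℝ) - α) from by ring, Real.rpow_neg hn0.le]
        field_simp

lemma aux_tail_sum_nat {β : ℝ} (hβ : 0 < β) {n : ℕ} (hn : 1 ≤ n) (u : Finset ℕ) :
    ∑ j ∈ u, ((n + 1 + j : ℕ) : ℝ) ^ (-(β + 1)) ≤ (n:ℝ) ^ (-β) / β := by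
  set v := u.image (fun j => n + 1 + j) with hv
  have himg : ∑ j ∈ u, ((n + 1 + j : ℕ) : ℝ) ^ (-(β + 1)) = ∑ k ∈ v, (k:ℝ) ^ (-(β + 1)) := by
    rw [hv, Finset.sum_image (fun a _ b _ h => by omega)]
  rw [himg]
  set K : ℕ := v.sup id with hK
  have hsub : v ⊆ Finset.Ioc n K := by
    intro k hk
    rw [Finset.mem_Ioc]
    constructor
    · rw [hv, Finset.mem_image] at hk
      obtain ⟨j, _, rfl⟩ := hk
      omega
    · exact Finset.le_sup (f := id) hk
  calc ∑ k ∈ v, (k:ℝ) ^ (-(β + 1))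
      ≤ ∑ k ∈ Finset.Ioc n K, (k:ℝ) ^ (-(β + 1)) :=
        Finset.sum_le_sum_of_subset_of_nonneg hsub (fun k _ _ => by positivity)
    _ ≤ (n:ℝ) ^ (-β) / β := aux_tail_sum hβ hn K

lemma part_iii (p : ℕ+ → ℝ)
    (α : ℝ) (hα0 : 0 < α) (hα1 : α < 1)
    (l : ℕ) (hl : 1 ≤ l)
    (C : ℝ) (hC : 0 < C)
    (hF : ∀ s : ℕ, 1 ≤ s → (∑' i : ℕ+, p i ^ l * (1 - p i) ^ s) ≤ C * (s:ℝ) ^ (α - (l:ℝ)))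
    (hFnn : ∀ s : ℕ, 0 ≤ ∑' i : ℕ+, p i ^ l * (1 - p i) ^ s) :
    ∃ C₃ > 0, ∀ n : ℕ, 2 ≤ n →
      ∑' j : ℕ, ∑ k ∈ Finset.Icc 1 (n + j),
          (∑' i : ℕ+, p i ^ l * (1 - p i) ^ (n + 1 + j)) / (k * ((n + 1 + j : ℝ) - k))
        ≤ C₃ * Real.log n / (n : ℝ) ^ ((l : ℝ) - α) := by
  set δ : ℝ := (l:ℝ) - α with hδdef
  have hl1 : (1:ℝ) ≤ (l:ℝ) := by exact_mod_cast hl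
  have hδ0 : 0 < δ := by rw [hδdef]; linarith
  refine ⟨6 * C / δ + 16 * C / δ ^ 2, by positivity, ?_⟩
  intro n hn
  have hn1 : 1 ≤ n := by omega
  have hn0 : (0:ℝ) < (n:ℝ) := by exact_mod_cast Nat.lt_of_lt_of_le Nat.zero_lt_two hn
  have hn2 : (2:ℝ) ≤ (n:ℝ) := by exact_mod_cast hn
  have hlog2 : Real.log 2 ≤ Real.log n := Real.log_le_log (by norm_num) hn2
  have hlogn : (1:ℝ) ≤ 2 * Real.log n := by
    have := Real.log_two_gt_d9
    linarith
  have hlognn : 0 ≤ Real.log n := by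
    have := Real.log_two_gt_d9
    linarith
  have hnd : (0:ℝ) < (n:ℝ) ^ δ := Real.rpow_pos_of_pos hn0 _
  apply tsum_le_of_sum_le'
  · positivity
  intro u
  -- per-j bound
  have hTj : ∀ j : ℕ,
      (∑ k ∈ Finset.Icc 1 (n + j),
        (∑' i : ℕ+, p i ^ l * (1 - p i) ^ (n + 1 + j)) / (k * ((n + 1 + j : ℝ) - k)))
      ≤ 6 * C * Real.log n * ((n + 1 + j : ℕ) : ℝ) ^ (-(δ + 1))
        + 4 * C / δ * (n:ℝ) ^ (-(δ/2)) * ((n + 1 + j : ℕ) : ℝ) ^ (-(δ/2 + 1)) := by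
    intro j
    set G : ℝ := ∑' i : ℕ+, p i ^ l * (1 - p i) ^ (n + 1 + j) with hG
    set mr : ℝ := (n:ℝ) + 1 + (j:ℝ) with hmr
    have hmrc : ((n + 1 + j : ℕ) : ℝ) = mr := by rw [hmr]; push_cast; ring
    have hmr0 : 0 < mr := by rw [hmr]; positivity
    have hmr1 : (1:ℝ) < mr := by rw [hmr]; push_cast; linarith [Nat.cast_nonneg (α := ℝ) j]
    -- inner weight sum
    have hsum_inv : ∑ k ∈ Finset.Icc 1 (n + j), (1:ℝ) / (mr - (k:ℝ))
        = ∑ k ∈ Finset.Icc 1 (n + j), (1:ℝ) / (k:ℝ) := by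
      apply Finset.sum_nbij' (fun k => n + 1 + j - k) (fun k => n + 1 + j - k)
      · intro a ha
        rw [Finset.mem_Icc] at ha ⊢
        omega
      · intro a ha
        rw [Finset.mem_Icc] at ha ⊢
        omega
      · intro a ha
        rw [Finset.mem_Icc] at ha
        omega
      · intro a ha
        rw [Finset.mem_Icc] at ha
        omega
      · intro a ha
        rw [Finset.mem_Icc] at ha
        congr 1
        rw [hmr]
        have hc : ((n + 1 + j - a : ℕ) : ℝ) = (n:ℝ) + 1 + (j:ℝ) - (a:ℝ) := by
          have : a ≤ n + 1 + j := by omega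
          push_cast [Nat.cast_sub this]
          ring
        rw [hc]
    have hWle : ∑ k ∈ Finset.Icc 1 (n + j), (1:ℝ) / ((k:ℝ) * (mr - (k:ℝ)))
        ≤ 2 / mr * (1 + Real.log mr) := by
      have hre : ∀ k ∈ Finset.Icc 1 (n + j),
          (1:ℝ) / ((k:ℝ) * (mr - (k:ℝ)))
            = 1 / mr * ((1:ℝ) / (k:ℝ) + (1:ℝ) / (mr - (k:ℝ))) := by
        intro k hk
        obtain ⟨hk1, hk2⟩ := Finset.mem_Icc.mp hk
        have hk0 : (0:ℝ) < (k:ℝ) := by exact_mod_cast hk1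
        have hkr : (k:ℝ) ≤ (n:ℝ) + (j:ℝ) := by exact_mod_cast hk2
        have hmk : (0:ℝ) < mr - (k:ℝ) := by rw [hmr]; linarith
        field_simp
        ring
      rw [Finset.sum_congr rfl hre, ← Finset.mul_sum, Finset.sum_add_distrib, hsum_inv]
      have hharm : ∑ k ∈ Finset.Icc 1 (n + j), (1:ℝ) / (k:ℝ) ≤ 1 + Real.log mr := by
        calc ∑ k ∈ Finset.Icc 1 (n + j), (1:ℝ) / (k:ℝ) ≤ 1 + Real.log ((n + j : ℕ) : ℝ) :=
              aux_harm (n + j)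
          _ ≤ 1 + Real.log mr := by
              have hpos : (0:ℝ) < ((n + j : ℕ) : ℝ) := by
                have : 1 ≤ n + j := by omega
                exact_mod_cast this
              have hle : ((n + j : ℕ) : ℝ) ≤ mr := by
                rw [hmr]; push_cast; linarith
              linarith [Real.log_le_log hpos hle]
      calc 1 / mr * (∑ k ∈ Finset.Icc 1 (n + j), (1:ℝ) / (k:ℝ)
              + ∑ k ∈ Finset.Icc 1 (n + j), (1:ℝ) / (k:ℝ))
          ≤ 1 / mr * ((1 + Real.log mr) + (1 + Real.log mr)) := by
            apply mul_le_mul_of_nonneg_left _ (by positivity)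
            linarith
        _ = 2 / mr * (1 + Real.log mr) := by ring
    -- G bound
    have hGle : G ≤ C * mr ^ (-δ) := by
      have := hF (n + 1 + j) (by omega)
      rw [hmrc] at this
      rw [show α - (l:ℝ) = -δ from by rw [hδdef]; ring] at this
      exact this
    have hGnn : 0 ≤ G := hFnn (n + 1 + j)
    -- factor G out
    have hfact : (∑ k ∈ Finset.Icc 1 (n + j), G / (k * ((n + 1 + j : ℝ) - k)))
        = G * ∑ k ∈ Finset.Icc 1 (n + j), (1:ℝ) / ((k:ℝ) * (mr - (k:ℝ))) := by
      rw [Finset.mul_sum]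
      refine Finset.sum_congr rfl fun k _ => ?_
      rw [hmr]
      push_cast
      ring
    -- log split
    have hmrd : 0 < mr ^ (δ/2) := Real.rpow_pos_of_pos hmr0 _
    have hlogsplit : 1 + Real.log mr
        ≤ 3 * Real.log n + 2 / δ * (mr ^ (δ/2) * (n:ℝ) ^ (-(δ/2))) := by
      have hd2 : 0 < δ / 2 := by linarith
      have hx : (0:ℝ) < mr / n := by positivity
      have hlog1 : Real.log (mr / n) ≤ 2 / δ * ((mr / n) ^ (δ/2)) := by
        have h1 : Real.log ((mr / n) ^ (δ/2)) = δ/2 * Real.log (mr / n) := Real.log_rpow hx _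
        have h2 : Real.log ((mr / n) ^ (δ/2)) ≤ (mr / n) ^ (δ/2) - 1 :=
          Real.log_le_sub_one_of_pos (Real.rpow_pos_of_pos hx _)
        have h3 : (0:ℝ) < (mr / n) ^ (δ/2) := Real.rpow_pos_of_pos hx _
        rw [h1] at h2
        have h5 : Real.log (mr / n) ≤ (mr / n) ^ (δ/2) / (δ/2) :=
          (le_div_iff₀ hd2).mpr (by linarith)
        have h6 : (mr / n) ^ (δ/2) / (δ/2) = 2 / δ * (mr / n) ^ (δ/2) := by
          field_simp
        linarith
      have hdiv : (mr / n) ^ (δ/2) = mr ^ (δ/2) * (n:ℝ) ^ (-(δ/2)) := by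
        rw [Real.div_rpow hmr0.le hn0.le, Real.rpow_neg hn0.le, div_eq_mul_inv]
      have hlogmr : Real.log mr = Real.log n + Real.log (mr / n) := by
        rw [Real.log_div hmr0.ne' hn0.ne']
        ring
      rw [hlogmr]
      rw [hdiv] at hlog1
      linarith
    -- combine
    have hsplit1 : mr ^ (-(δ + 1)) = mr ^ (-δ) * mr⁻¹ := by
      rw [← Real.rpow_neg_one mr, ← Real.rpow_add hmr0]
      ring_nf
    have hsplit2 : mr ^ (-(δ + 1)) * mr ^ (δ/2) = mr ^ (-(δ/2 + 1)) := by
      rw [← Real.rpow_add hmr0]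
      ring_nf
    have hc1 : 0 ≤ 2 * C * mr ^ (-(δ + 1)) := by positivity
    calc (∑ k ∈ Finset.Icc 1 (n + j), G / (k * ((n + 1 + j : ℝ) - k)))
        = G * ∑ k ∈ Finset.Icc 1 (n + j), (1:ℝ) / ((k:ℝ) * (mr - (k:ℝ))) := hfact
      _ ≤ (C * mr ^ (-δ)) * (2 / mr * (1 + Real.log mr)) := by
          apply mul_le_mul hGle hWle (Finset.sum_nonneg fun k hk => ?_) (by positivity)
          obtain ⟨hk1, hk2⟩ := Finset.mem_Icc.mp hk
          have hk0 : (0:ℝ) < (k:ℝ) := by exact_mod_cast hk1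
          have hkr : (k:ℝ) ≤ (n:ℝ) + (j:ℝ) := by exact_mod_cast hk2
          have hmk : (0:ℝ) < mr - (k:ℝ) := by rw [hmr]; linarith
          positivity
      _ = 2 * C * mr ^ (-(δ + 1)) * (1 + Real.log mr) := by
          rw [hsplit1]; ring
      _ ≤ 2 * C * mr ^ (-(δ + 1))
            * (3 * Real.log n + 2 / δ * (mr ^ (δ/2) * (n:ℝ) ^ (-(δ/2)))) :=
          mul_le_mul_of_nonneg_left hlogsplit hc1
      _ = 6 * C * Real.log n * mr ^ (-(δ + 1))
            + 4 * C / δ * (n:ℝ) ^ (-(δ/2)) * (mr ^ (-(δ + 1)) * mr ^ (δ/2)) := by ring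
      _ = 6 * C * Real.log n * ((n + 1 + j : ℕ) : ℝ) ^ (-(δ + 1))
            + 4 * C / δ * (n:ℝ) ^ (-(δ/2)) * ((n + 1 + j : ℕ) : ℝ) ^ (-(δ/2 + 1)) := by
          rw [hsplit2, hmrc]
  -- sum the per-j bounds over u
  have htail1 : ∑ j ∈ u, ((n + 1 + j : ℕ) : ℝ) ^ (-(δ + 1)) ≤ (n:ℝ) ^ (-δ) / δ :=
    aux_tail_sum_nat hδ0 hn1 u
  have htail2 : ∑ j ∈ u, ((n + 1 + j : ℕ) : ℝ) ^ (-(δ/2 + 1)) ≤ (n:ℝ) ^ (-(δ/2)) / (δ/2) :=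
    aux_tail_sum_nat (by linarith) hn1 u
  have hnn1 : (0:ℝ) ≤ 6 * C * Real.log n := by positivity
  have hnn2 : (0:ℝ) ≤ 4 * C / δ * (n:ℝ) ^ (-(δ/2)) := by positivity
  have hmm : (n:ℝ) ^ (-(δ/2)) * (n:ℝ) ^ (-(δ/2)) = (n:ℝ) ^ (-δ) := by
    rw [← Real.rpow_add hn0]
    ring_nf
  have hfin : (n:ℝ) ^ (-δ) = 1 / (n:ℝ) ^ δ := by
    rw [Real.rpow_neg hn0.le, one_div]
  calc ∑ j ∈ u, ∑ k ∈ Finset.Icc 1 (n + j),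
        (∑' i : ℕ+, p i ^ l * (1 - p i) ^ (n + 1 + j)) / (k * ((n + 1 + j : ℝ) - k))
      ≤ ∑ j ∈ u, (6 * C * Real.log n * ((n + 1 + j : ℕ) : ℝ) ^ (-(δ + 1))
          + 4 * C / δ * (n:ℝ) ^ (-(δ/2)) * ((n + 1 + j : ℕ) : ℝ) ^ (-(δ/2 + 1))) :=
        Finset.sum_le_sum fun j _ => hTj j
    _ = 6 * C * Real.log n * (∑ j ∈ u, ((n + 1 + j : ℕ) : ℝ) ^ (-(δ + 1)))
          + 4 * C / δ * (n:ℝ) ^ (-(δ/2)) * (∑ j ∈ u, ((n + 1 + j : ℕ) : ℝ) ^ (-(δ/2 + 1))) := by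
        rw [Finset.sum_add_distrib, Finset.mul_sum, Finset.mul_sum]
    _ ≤ 6 * C * Real.log n * ((n:ℝ) ^ (-δ) / δ)
          + 4 * C / δ * (n:ℝ) ^ (-(δ/2)) * ((n:ℝ) ^ (-(δ/2)) / (δ/2)) :=
        add_le_add (mul_le_mul_of_nonneg_left htail1 hnn1)
          (mul_le_mul_of_nonneg_left htail2 hnn2)
    _ = 6 * C / δ * Real.log n * (n:ℝ) ^ (-δ)
          + 8 * C / δ ^ 2 * ((n:ℝ) ^ (-(δ/2)) * (n:ℝ) ^ (-(δ/2))) := by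
        field_simp
        ring
    _ = 6 * C / δ * Real.log n * (n:ℝ) ^ (-δ) + 8 * C / δ ^ 2 * (n:ℝ) ^ (-δ) := by rw [hmm]
    _ ≤ 6 * C / δ * Real.log n * (n:ℝ) ^ (-δ)
          + 16 * C / δ ^ 2 * Real.log n * (n:ℝ) ^ (-δ) := by
        have h8 : (0:ℝ) ≤ 8 * C / δ ^ 2 * (n:ℝ) ^ (-δ) := by positivity
        have h9 : 8 * C / δ ^ 2 * (n:ℝ) ^ (-δ)
            ≤ 16 * C / δ ^ 2 * Real.log n * (n:ℝ) ^ (-δ) := by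
          calc 8 * C / δ ^ 2 * (n:ℝ) ^ (-δ) = 8 * C / δ ^ 2 * (n:ℝ) ^ (-δ) * 1 := by ring
            _ ≤ 8 * C / δ ^ 2 * (n:ℝ) ^ (-δ) * (2 * Real.log n) :=
                mul_le_mul_of_nonneg_left hlogn h8
            _ = 16 * C / δ ^ 2 * Real.log n * (n:ℝ) ^ (-δ) := by ring
        exact add_le_add_right h9 _
    _ = (6 * C / δ + 16 * C / δ ^ 2) * Real.log n / (n:ℝ) ^ ((l:ℝ) - α) := by
        rw [← hδdef, hfin]
        ring

end AuxLemmas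

/-- variance remainder bounds. Let `p` be a nonincreasing pmf with
`p j ≤ M j^{−1/α}`, `M > 0`, `α ∈ (0,1)`, and write `E[(1−p_X)^m] = ∑_i p_i (1−p_i)^m`.
Then:
(i) `∑_{m=1}^n ∑_{k=n−m+1}^n E[(1−p_X)^m]/(mk) ≤ C₁ (n^{−(1−α)} + (log n)/n)`;
(ii) for every `ℓ ≥ 1`,
`∑_{m=1}^n ∑_{k=n−m+1}^n (∑_i p_i^ℓ (1−p_i)^{m+k})/(mk) ≤ C₂ / n^{ℓ−α}`;
(iii) for every `ℓ ≥ 1`,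
`∑_{m=n+1}^∞ ∑_{k=1}^{m−1} (∑_i p_i^ℓ (1−p_i)^m)/(k(m−k)) ≤ C₃ (log n)/n^{ℓ−α}`. -/
theorem variance_remainder_bounds (p : ℕ+ → ℝ)
    (hp0 : ∀ j, 0 ≤ p j) (hsum : ∑' j, p j = 1) (hmono : Antitone p)
    (M α : ℝ) (hM : 0 < M) (hα : α ∈ Set.Ioo (0 : ℝ) 1)
    (hbound : ∀ j : ℕ+, p j ≤ M * (j : ℝ) ^ (-(1 / α))) :
    (∃ C₁ > 0, ∀ n : ℕ, 2 ≤ n →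
      ∑ m ∈ Finset.Icc 1 n, ∑ k ∈ Finset.Icc (n - m + 1) n,
          (∑' i : ℕ+, p i * (1 - p i) ^ m) / (m * k)
        ≤ C₁ * ((n : ℝ) ^ (-(1 - α)) + Real.log n / n)) ∧
    (∀ ℓ : ℕ, 1 ≤ ℓ → ∃ C₂ > 0, ∀ n : ℕ, 1 ≤ n →
      ∑ m ∈ Finset.Icc 1 n, ∑ k ∈ Finset.Icc (n - m + 1) n,
          (∑' i : ℕ+, p i ^ ℓ * (1 - p i) ^ (m + k)) / (m * k)
        ≤ C₂ / (n : ℝ) ^ ((ℓ : ℝ) - α)) ∧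
    (∀ ℓ : ℕ, 1 ≤ ℓ → ∃ C₃ > 0, ∀ n : ℕ, 2 ≤ n →
      ∑' j : ℕ, ∑ k ∈ Finset.Icc 1 (n + j),
          (∑' i : ℕ+, p i ^ ℓ * (1 - p i) ^ (n + 1 + j)) / (k * ((n + 1 + j : ℝ) - k))
        ≤ C₃ * Real.log n / (n : ℝ) ^ ((ℓ : ℝ) - α)) := by
  obtain ⟨hα0, hα1⟩ := hα
  have hps : Summable p := by
    by_contra hcon
    rw [tsum_eq_zero_of_not_summable hcon] at hsum
    norm_num at hsum
  have hp1 : ∀ i, p i ≤ 1 := by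
    intro i
    rw [← hsum]
    exact Summable.le_tsum hps i fun j _ => hp0 j
  have hFnn : ∀ (l : ℕ) (s : ℕ), 0 ≤ ∑' i : ℕ+, p i ^ l * (1 - p i) ^ s := by
    intro l s
    apply tsum_nonneg
    intro i
    exact mul_nonneg (pow_nonneg (hp0 i) l) (pow_nonneg (by linarith [hp1 i]) s)
  refine ⟨?_, ?_, ?_⟩
  · obtain ⟨C, hC, hF⟩ := aux_key p hp0 hsum M α hM hα0 hα1 hbound 1 le_rfl
    have hF1 : ∀ s : ℕ, 1 ≤ s → (∑' i : ℕ+, p i * (1 - p i) ^ s) ≤ C * (s:ℝ) ^ (α - 1) := by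
      intro s hs
      have h := hF s hs
      simpa using h
    have hFnn1 : ∀ s : ℕ, 0 ≤ ∑' i : ℕ+, p i * (1 - p i) ^ s := by
      intro s
      have h := hFnn 1 s
      simpa using h
    exact part_i p hp0 α hα0 hα1 C hC hF1 hFnn1
  · intro l hl
    obtain ⟨C, hC, hF⟩ := aux_key p hp0 hsum M α hM hα0 hα1 hbound l hl
    exact part_ii p α hα0 hα1 l hl C hC hF (hFnn l)
  · intro l hl
    obtain ⟨C, hC, hF⟩ := aux_key p hp0 hsum M α hM hα0 hα1 hbound l hl
    exact part_iii p α hα0 hα1 l hl C hC hF (hFnn l)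
end
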